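/- arXiv:2307.00605 — 5 statements merged into one kernel-verified Lean document; each statement's English description precedes it below -/
import Mathlib

section
/- For every f ∈ M, the wave u^f is twice continuously differentiable on [0,∞), u^f(t) ∈ dom L₀* for all t ≥ 0, (u^f)''(t) + L₀*u^f(t) = 0 for all t ≥ 0, u^f(0) = (u^f)'(0) = 0, and Γ₁u^f(t) = f(t) for all t ≥ 0; i.e., u^f is a classical solution of the dynamical system with boundary control determined by L₀. -/
open MeasureTheory
open scoped ComplexInnerProductSpace

variable {H : Type*} [NormedAddCommGroup H] [InnerProductSpace ℂ H] [CompleteSpace H]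

/-- `Iᵗ = L^{-1/2}·sin(t·L^{1/2})`, realized by applying the continuous functional calculus of
the bounded positive self-adjoint operator `T = L⁻¹` to the continuous function
`hₜ(x) = √x·sin(t/√x)` (for `x > 0`, extended by `0` at `x ≤ 0`). -/
noncomputable def waveOp (T : H →L[ℂ] H) (t : ℝ) : H →L[ℂ] H :=
  cfc (fun x : ℝ => if 0 < x then Real.sqrt x * Real.sin (t / Real.sqrt x) else 0) T

/-- The class `M` of smooth controls: smooth `K`-valued functions of time vanishing near `t = 0`
(all time functions are extended by zero to `t < 0`). -/
def IsSmoothControl (K : Submodule ℂ H) (f : ℝ → H) : Prop :=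
  ContDiff ℝ (⊤ : ℕ∞) f ∧ (∀ t, f t ∈ K) ∧ ∃ ε > 0, ∀ t ≤ ε, f t = 0

/-- The wave `u^f(t) = -f(t) + ∫₀ᵗ I^{t-s} f''(s) ds` (Bochner integral). -/
noncomputable def wave (T : H →L[ℂ] H) (f : ℝ → H) (t : ℝ) : H :=
  -f t + ∫ s in (0:ℝ)..t, waveOp T (t - s) (deriv (deriv f) s)

/-- The context of the paper: `L₀` is a closed, densely defined, symmetric, positive definite
operator in the Hilbert space `H`; `L` is its Friedrichs (self-adjoint) extension,
`L₀ ⊆ L ⊆ L₀*`, with an everywhere defined bounded self-adjoint positive injective inverse `T`;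
`K = ker L₀*`.  The boundary operators are `Γ₁y = T(L₀*y) − y` and `Γ₂y = P(L₀*y)`, where `P`
is the orthogonal projection onto `K`. -/
structure Setting (L₀ L : H →ₗ.[ℂ] H) (T : H →L[ℂ] H) (K : Submodule ℂ H) : Prop where
  dense_domain : Dense (L₀.domain : Set H)
  closed : L₀.IsClosed
  symmetric : ∀ x y : L₀.domain, ⟪L₀ x, (y : H)⟫ = ⟪(x : H), L₀ y⟫
  posdef : ∃ γ : ℝ, 0 < γ ∧ ∀ x : L₀.domain, γ * ‖(x : H)‖ ^ 2 ≤ (⟪L₀ x, (x : H)⟫).re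
  extension : L₀ ≤ L
  le_adjoint : L ≤ L₀.adjoint
  selfadjoint : L.adjoint = L
  T_selfadjoint : IsSelfAdjoint T
  T_positive : ∀ x : H, 0 ≤ (⟪T x, x⟫).re
  T_injective : Function.Injective T
  T_inv_left : ∀ x : L.domain, T (L x) = x
  T_mem_domain : ∀ y : H, T y ∈ L.domain
  T_inv_right : ∀ y : H, ∀ hy : T y ∈ L.domain, L ⟨T y, hy⟩ = y
  kernel : ∀ x : H, x ∈ K ↔ ∃ hx : x ∈ L₀.adjoint.domain, L₀.adjoint ⟨x, hx⟩ = 0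

/-- The reachable set `U^τ = {u^f(τ) : f ∈ M}` for `τ ≥ 0`, and `{0}` for `τ < 0`. -/
def reachSet (K : Submodule ℂ H) (T : H →L[ℂ] H) (τ : ℝ) : Set H :=
  if 0 ≤ τ then {x | ∃ f, IsSmoothControl K f ∧ wave T f τ = x} else {0}

/-- The total reachable set `U = span ⋃_{τ>0} U^τ`. -/
def reachSpan (K : Submodule ℂ H) (T : H →L[ℂ] H) : Submodule ℂ H :=
  Submodule.span ℂ (⋃ τ ∈ Set.Ioi (0:ℝ), reachSet K T τ)

/-- The wave `v^ψ(t) = ∫₀ᵗ I^{t-s} ψ(s) ds` produced by a source `ψ` in system `β`. -/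
noncomputable def sourceWave (T : H →L[ℂ] H) (ψ : ℝ → H) (t : ℝ) : H :=
  ∫ s in (0:ℝ)..t, waveOp T (t - s) (ψ s)

set_option linter.unusedSectionVars false
set_option linter.unnecessarySimpa false
set_option maxHeartbeats 1000000

namespace Stmt2Aux


lemma lip_sin (a b : ℝ) : |Real.sin a - Real.sin b| ≤ |a - b| := by
  have := Convex.norm_image_sub_le_of_norm_hasDerivWithin_le
    (f := Real.sin) (f' := Real.cos) (C := 1) (s := Set.univ)
    (fun x _ => (Real.hasDerivAt_sin x).hasDerivWithinAt)
    (fun x _ => by simpa [Real.norm_eq_abs] using Real.abs_cos_le_one x)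
    convex_univ (Set.mem_univ b) (Set.mem_univ a)
  simpa [Real.norm_eq_abs] using this

lemma lip_cos (a b : ℝ) : |Real.cos a - Real.cos b| ≤ |a - b| := by
  have := Convex.norm_image_sub_le_of_norm_hasDerivWithin_le
    (f := Real.cos) (f' := fun x => -Real.sin x) (C := 1) (s := Set.univ)
    (fun x _ => (Real.hasDerivAt_cos x).hasDerivWithinAt)
    (fun x _ => by simpa [Real.norm_eq_abs] using Real.abs_sin_le_one x)
    convex_univ (Set.mem_univ b) (Set.mem_univ a)
  simpa [Real.norm_eq_abs] using this

lemma abs_le_of_uIcc {x d : ℝ} (hx : x ∈ Set.uIcc 0 d) : |x| ≤ |d| := by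
  rcases Set.mem_uIcc.mp hx with ⟨h1, h2⟩ | ⟨h1, h2⟩ <;>
    rw [abs_le] <;> cases' abs_cases d with h h <;> constructor <;> linarith

lemma sin_taylor (u d : ℝ) : |Real.sin (u + d) - Real.sin u - d * Real.cos u| ≤ d ^ 2 := by
  have key : ∀ x ∈ Set.uIcc (0:ℝ) d, HasDerivWithinAt (fun s => Real.sin (u + s) - s * Real.cos u)
      (Real.cos (u + x) - Real.cos u) (Set.uIcc (0:ℝ) d) x := by
    intro x _
    have h1 : HasDerivAt (fun s : ℝ => Real.sin (u + s)) (Real.cos (u + x)) x := by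
      simpa using ((hasDerivAt_id' x).const_add u).sin
    exact (h1.sub ((hasDerivAt_id x).mul_const _)).hasDerivWithinAt.congr_deriv (by ring)
  have bound : ∀ x ∈ Set.uIcc (0:ℝ) d, ‖Real.cos (u + x) - Real.cos u‖ ≤ |d| := fun x hx => by
    rw [Real.norm_eq_abs]
    exact ((lip_cos (u + x) u).trans_eq (by rw [add_sub_cancel_left])).trans (abs_le_of_uIcc hx)
  have := Convex.norm_image_sub_le_of_norm_hasDerivWithin_le key bound (convex_uIcc 0 d)
    Set.left_mem_uIcc Set.right_mem_uIcc
  have h3 : Real.sin (u + d) - Real.sin u - d * Real.cos u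
      = Real.sin (u + d) - d * Real.cos u - Real.sin u := by ring
  rw [h3]
  simpa [Real.norm_eq_abs, abs_mul, ← sq_abs d, sq] using this

lemma cos_taylor (u d : ℝ) : |Real.cos (u + d) - Real.cos u + d * Real.sin u| ≤ d ^ 2 := by
  have key : ∀ x ∈ Set.uIcc (0:ℝ) d, HasDerivWithinAt (fun s => Real.cos (u + s) + s * Real.sin u)
      (Real.sin u - Real.sin (u + x)) (Set.uIcc (0:ℝ) d) x := by
    intro x _
    have h1 : HasDerivAt (fun s : ℝ => Real.cos (u + s)) (-Real.sin (u + x)) x := by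
      simpa using ((hasDerivAt_id' x).const_add u).cos
    exact (h1.add ((hasDerivAt_id x).mul_const _)).hasDerivWithinAt.congr_deriv (by ring)
  have bound : ∀ x ∈ Set.uIcc (0:ℝ) d, ‖Real.sin u - Real.sin (u + x)‖ ≤ |d| := fun x hx => by
    rw [Real.norm_eq_abs]
    have := lip_sin u (u + x)
    rw [show u - (u + x) = -x by ring, abs_neg] at this
    exact this.trans (abs_le_of_uIcc hx)
  have := Convex.norm_image_sub_le_of_norm_hasDerivWithin_le key bound (convex_uIcc 0 d)
    Set.left_mem_uIcc Set.right_mem_uIcc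
  have h3 : Real.cos (u + d) - Real.cos u + d * Real.sin u
      = Real.cos (u + d) + d * Real.sin u - Real.cos u := by ring
  rw [h3]
  simpa [Real.norm_eq_abs, abs_mul, ← sq_abs d, sq] using this

/-- the function of `waveOp`. -/
noncomputable def hfun (t x : ℝ) : ℝ :=
  if 0 < x then Real.sqrt x * Real.sin (t / Real.sqrt x) else 0

noncomputable def cfun (t x : ℝ) : ℝ :=
  if 0 < x then x * Real.cos (t / Real.sqrt x) else x

noncomputable def jfun (t x : ℝ) : ℝ :=
  if 0 < x then x * Real.sqrt x * Real.sin (t / Real.sqrt x) else t * x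

lemma hfun_lip (a b x : ℝ) : |hfun a x - hfun b x| ≤ |a - b| := by
  unfold hfun
  split
  · next hx =>
    have hr : 0 < Real.sqrt x := Real.sqrt_pos.mpr hx
    rw [← mul_sub, abs_mul, abs_of_pos hr]
    calc Real.sqrt x * |Real.sin (a / Real.sqrt x) - Real.sin (b / Real.sqrt x)|
        ≤ Real.sqrt x * |a / Real.sqrt x - b / Real.sqrt x| := by
          exact mul_le_mul_of_nonneg_left (lip_sin _ _) hr.le
      _ = |a - b| := by
          rw [div_sub_div_same, abs_div, abs_of_pos hr]
          field_simp
  · simpa using abs_nonneg (a - b)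

lemma hfun_bound (t x : ℝ) : |hfun t x| ≤ |t| := by
  have := hfun_lip t 0 x
  simpa [hfun, mul_zero] using this

lemma jfun_taylor {M : ℝ} (t d x : ℝ) (hx : |x| ≤ M) :
    |jfun (t + d) x - jfun t x - d * cfun t x| ≤ Real.sqrt M * d ^ 2 := by
  unfold jfun cfun
  split
  · next hxpos =>
    have hr : 0 < Real.sqrt x := Real.sqrt_pos.mpr hxpos
    have hrx : x / Real.sqrt x = Real.sqrt x := Real.div_sqrt
    have key := sin_taylor (t / Real.sqrt x) (d / Real.sqrt x)
    have e1 : x * Real.sqrt x * Real.sin ((t + d) / Real.sqrt x)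
        - x * Real.sqrt x * Real.sin (t / Real.sqrt x) - d * (x * Real.cos (t / Real.sqrt x))
        = (x * Real.sqrt x) * (Real.sin (t / Real.sqrt x + d / Real.sqrt x)
            - Real.sin (t / Real.sqrt x)
            - (d / Real.sqrt x) * Real.cos (t / Real.sqrt x)) := by
      rw [← add_div]; field_simp
    rw [e1, abs_mul]
    have hxr : (0:ℝ) ≤ x * Real.sqrt x := by positivity
    calc |x * Real.sqrt x| * _ ≤ (x * Real.sqrt x) * ((d / Real.sqrt x) ^ 2) := by
          rw [abs_of_nonneg hxr]
          exact mul_le_mul_of_nonneg_left key hxr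
      _ = Real.sqrt x * d ^ 2 := by
          rw [div_pow, Real.sq_sqrt hxpos.le]; field_simp
      _ ≤ Real.sqrt M * d ^ 2 := by
          have : Real.sqrt x ≤ Real.sqrt M := Real.sqrt_le_sqrt ((le_abs_self x).trans hx)
          exact mul_le_mul_of_nonneg_right this (sq_nonneg d)
  · next hxpos =>
    have : (t + d) * x - t * x - d * x = 0 := by ring
    rw [this, abs_zero]
    positivity

lemma cfun_taylor (t d x : ℝ) : |cfun (t + d) x - cfun t x + d * hfun t x| ≤ d ^ 2 := by
  unfold cfun hfun
  split
  · next hxpos =>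
    have hr : 0 < Real.sqrt x := Real.sqrt_pos.mpr hxpos
    have key := cos_taylor (t / Real.sqrt x) (d / Real.sqrt x)
    have e1 : x * Real.cos ((t + d) / Real.sqrt x) - x * Real.cos (t / Real.sqrt x)
        + d * (Real.sqrt x * Real.sin (t / Real.sqrt x))
        = x * (Real.cos (t / Real.sqrt x + d / Real.sqrt x) - Real.cos (t / Real.sqrt x)
            + (d / Real.sqrt x) * Real.sin (t / Real.sqrt x)) := by
      have h2 : x * (d / Real.sqrt x * Real.sin (t / Real.sqrt x))
          = d * (Real.sqrt x * Real.sin (t / Real.sqrt x)) := by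
        rw [show x * (d / Real.sqrt x * Real.sin (t / Real.sqrt x))
            = (x / Real.sqrt x) * (d * Real.sin (t / Real.sqrt x)) from by ring, Real.div_sqrt]
        ring
      rw [← add_div]
      linear_combination -h2
    rw [e1, abs_mul, abs_of_pos hxpos]
    calc x * _ ≤ x * ((d / Real.sqrt x) ^ 2) := mul_le_mul_of_nonneg_left key hxpos.le
      _ = d ^ 2 := by rw [div_pow, Real.sq_sqrt hxpos.le]; field_simp
  · next =>
    have : x - x + d * 0 = 0 := by ring
    rw [this, abs_zero]
    positivity


/-- continuity helper: piecewise function continuous away from 0, with a squeeze at 0. -/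
lemma cont_aux {g : ℝ → ℝ} {B : ℝ → ℝ}
    (hpos : ∀ x₀ : ℝ, 0 < x₀ → ContinuousAt g x₀)
    (hneg : ∀ x₀ : ℝ, x₀ < 0 → ContinuousAt g x₀)
    (hg0 : g 0 = 0) (hB : Continuous B) (hB0 : B 0 = 0) (hbd : ∀ x, |g x| ≤ B x) :
    Continuous g := by
  rw [continuous_iff_continuousAt]
  intro x₀
  rcases lt_trichotomy x₀ 0 with h | h | h
  · exact hneg x₀ h
  · subst h
    rw [ContinuousAt, hg0]
    exact squeeze_zero_norm (fun x => by simpa [Real.norm_eq_abs] using hbd x)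
      (by simpa [hB0] using hB.tendsto 0)
  · exact hpos x₀ h

lemma contAt_pos_piece {p : ℝ → ℝ} (hp : ∀ x₀, 0 < x₀ → ContinuousAt p x₀) (q : ℝ → ℝ)
    {x₀ : ℝ} (h : 0 < x₀) : ContinuousAt (fun x => if 0 < x then p x else q x) x₀ := by
  have : (fun x => if 0 < x then p x else q x) =ᶠ[nhds x₀] p :=
    Filter.eventuallyEq_of_mem (Ioi_mem_nhds h) (fun x hx => if_pos hx)
  exact (hp x₀ h).congr this.symm

lemma contAt_neg_piece (p : ℝ → ℝ) {q : ℝ → ℝ} (hq : ∀ x₀, x₀ < 0 → ContinuousAt q x₀)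
    {x₀ : ℝ} (h : x₀ < 0) : ContinuousAt (fun x => if 0 < x then p x else q x) x₀ := by
  have : (fun x => if 0 < x then p x else q x) =ᶠ[nhds x₀] q :=
    Filter.eventuallyEq_of_mem (Iio_mem_nhds h) (fun x hx => if_neg (by simp at hx ⊢; linarith))
  exact (hq x₀ h).congr this.symm

lemma contAt_trig (t : ℝ) (base : ℝ → ℝ) (hbase : Continuous base) (tr : ℝ → ℝ)
    (htr : Continuous tr) {x₀ : ℝ} (h : 0 < x₀) :
    ContinuousAt (fun x => base x * tr (t / Real.sqrt x)) x₀ := by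
  have h1 : ContinuousAt (fun x : ℝ => t / Real.sqrt x) x₀ :=
    continuousAt_const.div (Real.continuous_sqrt.continuousAt) (by positivity)
  exact (hbase.continuousAt).mul (htr.continuousAt.comp h1)

lemma hfun_cont (t : ℝ) : Continuous (hfun t) := by
  apply cont_aux (B := fun x => Real.sqrt |x|)
  · exact fun x₀ h => contAt_pos_piece (fun x₀ h => contAt_trig t _ Real.continuous_sqrt _ Real.continuous_sin h) _ h
  · exact fun x₀ h => contAt_neg_piece _ (fun _ _ => continuousAt_const) h
  · simp [hfun]
  · exact Real.continuous_sqrt.comp continuous_abs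
  · simp
  · intro x
    unfold hfun; split
    · next hx =>
      rw [abs_mul, abs_of_nonneg (Real.sqrt_nonneg x), abs_of_pos hx]
      calc Real.sqrt x * |Real.sin (t / Real.sqrt x)| ≤ Real.sqrt x * 1 :=
        mul_le_mul_of_nonneg_left (Real.abs_sin_le_one _) (Real.sqrt_nonneg x)
      _ = Real.sqrt x := mul_one _
    · simp [Real.sqrt_nonneg]

lemma cfun_cont (t : ℝ) : Continuous (cfun t) := by
  apply cont_aux (B := fun x => |x|)
  · exact fun x₀ h => contAt_pos_piece (fun x₀ h => contAt_trig t _ continuous_id _ Real.continuous_cos h) _ h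
  · exact fun x₀ h => contAt_neg_piece _ (fun _ _ => continuous_id.continuousAt) h
  · simp [cfun]
  · exact continuous_abs
  · simp
  · intro x
    unfold cfun; split
    · next hx =>
      rw [abs_mul]
      calc |x| * |Real.cos (t / Real.sqrt x)| ≤ |x| * 1 :=
        mul_le_mul_of_nonneg_left (Real.abs_cos_le_one _) (abs_nonneg x)
      _ = |x| := mul_one _
    · exact le_refl _

lemma jfun_cont (t : ℝ) : Continuous (jfun t) := by
  apply cont_aux (B := fun x => (Real.sqrt |x| + |t|) * |x|)
  · refine fun x₀ h => contAt_pos_piece (fun x₀ h => ?_) _ h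
    exact contAt_trig t _ (continuous_id.mul Real.continuous_sqrt) _ Real.continuous_sin h
  · exact fun x₀ h => contAt_neg_piece _ (fun _ _ => (continuous_const.mul continuous_id).continuousAt) h
  · simp [jfun]
  · exact ((Real.continuous_sqrt.comp continuous_abs).add continuous_const).mul continuous_abs
  · simp
  · intro x
    unfold jfun; split
    · next hx =>
      have hax : |x| = x := abs_of_pos hx
      rw [hax, abs_mul, abs_mul, hax, abs_of_nonneg (Real.sqrt_nonneg x)]
      have h1 : x * Real.sqrt x * |Real.sin (t / Real.sqrt x)| ≤ x * Real.sqrt x * 1 :=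
        mul_le_mul_of_nonneg_left (Real.abs_sin_le_one _) (by positivity)
      rw [mul_one] at h1
      refine h1.trans ?_
      have h2 : Real.sqrt x ≤ Real.sqrt x + |t| := by linarith [abs_nonneg t]
      calc x * Real.sqrt x = Real.sqrt x * x := by ring
        _ ≤ (Real.sqrt x + |t|) * x := mul_le_mul_of_nonneg_right h2 hx.le
    · rw [abs_mul]
      exact mul_le_mul_of_nonneg_right (by linarith [Real.sqrt_nonneg |x|]) (abs_nonneg x)


lemma hasDerivAt_of_sq_bound' {E : Type*} [NormedAddCommGroup E] [NormedSpace ℝ E]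
    (f : ℝ → E) (f' : E) (r K : ℝ)
    (h : ∀ y, ‖f y - f r - (y - r) • f'‖ ≤ K * (y - r)^2) : HasDerivAt f f' r := by
  rw [hasDerivAt_iff_isLittleO]
  have h1 : (fun y => f y - f r - (y - r) • f') =O[nhds r] (fun y => (y-r)^2) :=
    Asymptotics.IsBigO.of_bound K (by filter_upwards with y; simpa [Real.norm_eq_abs, sq_abs] using h y)
  refine h1.trans_isLittleO ?_
  have h2 : (fun y : ℝ => (y - r)^2) = fun y => (y-r) * (y-r) := by ext y; ring
  rw [h2]
  simpa using (Asymptotics.isLittleO_one_iff ℝ |>.mpr (by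
    have : ContinuousAt (fun y : ℝ => y - r) r := by fun_prop
    simpa using this.tendsto)).mul_isBigO (Asymptotics.isBigO_refl (fun y : ℝ => y - r) (nhds r))

section cplx
variable {H : Type*} [NormedAddCommGroup H] [InnerProductSpace ℂ H] [CompleteSpace H]

noncomputable def Iop (T : H →L[ℂ] H) (t : ℝ) : H →L[ℝ] H := (cfc (hfun t) T).restrictScalars ℝ
noncomputable def Jop (T : H →L[ℂ] H) (t : ℝ) : H →L[ℝ] H := (cfc (jfun t) T).restrictScalars ℝ
noncomputable def Jd (T : H →L[ℂ] H) (t : ℝ) : H →L[ℝ] H := (cfc (cfun t) T).restrictScalars ℝ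

lemma restrict_sub (X Y : H →L[ℂ] H) :
    (X - Y).restrictScalars ℝ = X.restrictScalars ℝ - Y.restrictScalars ℝ := rfl

lemma restrict_smul (c : ℝ) (X : H →L[ℂ] H) :
    ((c • X).restrictScalars ℝ : H →L[ℝ] H) = c • (X.restrictScalars ℝ) := by
  ext x; simp

section ops
variable (T : H →L[ℂ] H) (hT : IsSelfAdjoint T)
include hT

lemma Iop_sub_norm (a b : ℝ) : ‖Iop T a - Iop T b‖ ≤ |a - b| := by
  rw [Iop, Iop, ← restrict_sub, ContinuousLinearMap.norm_restrictScalars,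
    ← cfc_sub _ _ T (hfun_cont a).continuousOn (hfun_cont b).continuousOn]
  exact norm_cfc_le (abs_nonneg _) fun x _ => by
    rw [Real.norm_eq_abs]; exact hfun_lip a b x

lemma Iop_norm (t : ℝ) : ‖Iop T t‖ ≤ |t| := by
  have := Iop_sub_norm T hT t 0
  have h0 : Iop T 0 = 0 := by
    rw [Iop, show hfun 0 = fun _ : ℝ => (0:ℝ) from funext fun x => by simp [hfun]]
    rw [cfc_const_zero]; rfl
  rw [h0, sub_zero, sub_zero] at this
  exact this

lemma Iop_zero : Iop T 0 = 0 := by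
  rw [Iop, show hfun 0 = fun _ : ℝ => (0:ℝ) from funext fun x => by simp [hfun]]
  rw [cfc_const_zero]; rfl

lemma Jop_zero : Jop T 0 = 0 := by
  rw [Jop, show jfun 0 = fun _ : ℝ => (0:ℝ) from funext fun x => by simp [jfun]]
  rw [cfc_const_zero]; rfl

lemma Jd_zero : Jd T 0 = T.restrictScalars ℝ := by
  rw [Jd, show cfun 0 = fun x : ℝ => x from funext fun x => by
    simp only [cfun, zero_div, Real.cos_zero, mul_one]; split <;> rfl]
  rw [cfc_id' ℝ T]

lemma Iop_continuous : Continuous (Iop T) := by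
  have : LipschitzWith 1 (Iop T) := LipschitzWith.of_dist_le_mul fun a b => by
    rw [dist_eq_norm, Real.dist_eq]; simpa using Iop_sub_norm T hT a b
  exact this.continuous

lemma Jop_hasDerivAt (r : ℝ) : HasDerivAt (Jop T) (Jd T r) r := by
  set M := ‖T‖ * ‖(1 : H →L[ℂ] H)‖ with hM
  have hMx : ∀ x ∈ spectrum ℝ T, |x| ≤ M := fun x hx => by
    simpa [Real.norm_eq_abs] using spectrum.norm_le_norm_mul_of_mem hx
  apply hasDerivAt_of_sq_bound' _ _ _ (Real.sqrt M)
  intro y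
  have e1 : Jop T y - Jop T r - (y - r) • Jd T r
      = (cfc (fun x => jfun y x - jfun r x - (y - r) • cfun r x) T).restrictScalars ℝ := by
    rw [cfc_sub (fun x => jfun y x - jfun r x) (fun x => (y - r) • cfun r x) T ((jfun_cont y).sub (jfun_cont r)).continuousOn
        (by exact ((cfun_cont r).const_smul (y - r)).continuousOn),
      cfc_sub _ _ T (jfun_cont y).continuousOn (jfun_cont r).continuousOn,
      cfc_smul (y - r) _ T (cfun_cont r).continuousOn]
    rw [Jop, Jop, Jd, restrict_sub, restrict_sub, restrict_smul]
  rw [e1, ContinuousLinearMap.norm_restrictScalars]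
  apply norm_cfc_le (by positivity)
  intro x hx
  rw [Real.norm_eq_abs, smul_eq_mul]
  have := jfun_taylor r (y - r) x (hMx x hx)
  rwa [add_sub_cancel] at this

lemma Jd_hasDerivAt (r : ℝ) : HasDerivAt (Jd T) (-(Iop T r)) r := by
  apply hasDerivAt_of_sq_bound' _ _ _ 1
  intro y
  have e1 : Jd T y - Jd T r - (y - r) • (-(Iop T r))
      = (cfc (fun x => cfun y x - cfun r x + (y - r) • hfun r x) T).restrictScalars ℝ := by
    have hadd := cfc_add (a := T) (fun x => cfun y x - cfun r x) (fun x => (y - r) • hfun r x)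
      ((cfun_cont y).sub (cfun_cont r)).continuousOn (by exact ((hfun_cont r).const_smul (y - r)).continuousOn)
    have hsub := cfc_sub (cfun y) (cfun r) T (cfun_cont y).continuousOn (cfun_cont r).continuousOn
    have hsmul := cfc_smul (y - r) (hfun r) T (hfun_cont r).continuousOn
    rw [hadd, hsub, hsmul, Jd, Jd, Iop]
    ext v
    simp [sub_eq_add_neg]
  rw [e1, ContinuousLinearMap.norm_restrictScalars, one_mul]
  apply norm_cfc_le (sq_nonneg _)
  intro x hx
  rw [Real.norm_eq_abs, smul_eq_mul]
  have := cfun_taylor r (y - r) x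
  rwa [add_sub_cancel] at this

lemma T_Iop (hspec : ∀ x ∈ spectrum ℝ T, (0:ℝ) ≤ x) (r : ℝ) (v : H) :
    T (Iop T r v) = Jop T r v := by
  have e1 : cfc (jfun r) T = T * cfc (hfun r) T := by
    have h1 : cfc (fun x : ℝ => x * hfun r x) T = cfc (fun x : ℝ => x) T * cfc (hfun r) T :=
      cfc_mul _ _ T continuous_id.continuousOn (hfun_cont r).continuousOn
    rw [← cfc_congr (f := fun x : ℝ => x * hfun r x) (g := jfun r) ?_, h1, cfc_id' ℝ T]
    intro x hx
    have hx0 := hspec x hx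
    simp only [hfun, jfun]
    split
    · ring
    · next h => 
      have : x = 0 := le_antisymm (not_lt.mp h) hx0
      simp [this]
  show T ((cfc (hfun r) T) v) = (cfc (jfun r) T) v
  rw [e1]; rfl

end ops
end cplx


section realspace
variable {H : Type*} [NormedAddCommGroup H] [NormedSpace ℝ H] [CompleteSpace H]

lemma vanish_deriv {g : ℝ → H} {ε : ℝ} (h : ∀ r < ε, g r = 0) :
    ∀ r < ε, deriv g r = 0 := by
  intro r hr
  have hev : g =ᶠ[nhds r] (fun _ => (0:H)) :=
    Filter.eventuallyEq_of_mem (Iio_mem_nhds hr) (fun x hx => h x hx)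
  rw [hev.deriv_eq, deriv_const]

lemma extend_conv (Φ : ℝ → H →L[ℝ] H) (hΦ : Continuous Φ) (g : ℝ → H) (hg : Continuous g)
    {ε : ℝ} (hε : 0 < ε) (h0 : ∀ r < ε, g r = 0) {t A : ℝ} (ht : t ≤ A) :
    ∫ s in (0:ℝ)..t, Φ s (g (t - s)) = ∫ s in (0:ℝ)..A, Φ s (g (t - s)) := by
  have hcont : Continuous fun s => Φ s (g (t - s)) :=
    hΦ.clm_apply (hg.comp (continuous_const.sub continuous_id))
  have h2 : ∫ s in t..A, Φ s (g (t - s)) = 0 := by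
    have heq : Set.EqOn (fun s => Φ s (g (t - s))) (fun _ => (0:H)) (Set.uIcc t A) := by
      intro s hs
      have hts : t ≤ s := by rw [Set.uIcc_of_le ht] at hs; exact hs.1
      have : g (t - s) = 0 := h0 _ (by linarith)
      simp [this]
    rw [intervalIntegral.integral_congr heq, intervalIntegral.integral_zero]
  have h3 := intervalIntegral.integral_add_adjacent_intervals (μ := volume) (a := (0:ℝ)) (b := t)
    (c := A) (hcont.intervalIntegrable _ _) (hcont.intervalIntegrable _ _)
  rw [← h3, h2, add_zero]

lemma conv_hasDerivAt (Φ : ℝ → H →L[ℝ] H) (hΦ : Continuous Φ) (g : ℝ → H)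
    (hgd : Differentiable ℝ g) (hg' : Continuous (deriv g))
    {ε : ℝ} (hε : 0 < ε) (h0 : ∀ r < ε, g r = 0) (t₀ : ℝ) :
    HasDerivAt (fun t => ∫ s in (0:ℝ)..t, Φ s (g (t - s)))
      (∫ s in (0:ℝ)..t₀, Φ s (deriv g (t₀ - s))) t₀ := by
  have hg : Continuous g := hgd.continuous
  set A := t₀ + 1 with hA
  -- bounds
  obtain ⟨C1, hC1⟩ := (isCompact_uIcc (a := (0:ℝ)) (b := A)).exists_bound_of_continuousOn
    hΦ.continuousOn
  obtain ⟨C2, hC2⟩ := (isCompact_Icc (a := t₀ - 1 - |A|) (b := t₀ + 1 + |A|)).exists_bound_of_continuousOn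
    hg'.continuousOn
  have hC1' : 0 ≤ C1 := le_trans (norm_nonneg _) (hC1 0 Set.left_mem_uIcc)
  have memIcc : ∀ x ∈ Metric.ball t₀ 1, ∀ s ∈ Set.uIoc (0:ℝ) A,
      x - s ∈ Set.Icc (t₀ - 1 - |A|) (t₀ + 1 + |A|) := by
    intro x hx s hs
    rw [Metric.mem_ball, Real.dist_eq, abs_lt] at hx
    have hs1 : min 0 A < s := hs.1
    have hs2 : s ≤ max 0 A := hs.2
    have habs1 : -|A| ≤ s := le_trans (by cases' le_total (0:ℝ) A with h h <;>
      simp [min_def, h] <;> linarith [neg_abs_le A, abs_nonneg A]) hs1.le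
    have habs2 : s ≤ |A| := hs2.trans (by cases' le_total (0:ℝ) A with h h <;>
      simp [max_def, h] <;> linarith [le_abs_self A, abs_nonneg A])
    constructor <;> [linarith; linarith]
  -- derivative of the fixed-endpoint integral
  have key : HasDerivAt (fun t => ∫ s in (0:ℝ)..A, Φ s (g (t - s)))
      (∫ s in (0:ℝ)..A, Φ s (deriv g (t₀ - s))) t₀ := by
    have hmeas : ∀ x : ℝ, AEStronglyMeasurable (fun s => Φ s (g (x - s)))
        (volume.restrict (Set.uIoc (0:ℝ) A)) := fun x =>
      (hΦ.clm_apply (hg.comp (continuous_const.sub continuous_id))).aestronglyMeasurable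
    have hmeas' : ∀ x : ℝ, AEStronglyMeasurable (fun s => Φ s (deriv g (x - s)))
        (volume.restrict (Set.uIoc (0:ℝ) A)) := fun x =>
      (hΦ.clm_apply (hg'.comp (continuous_const.sub continuous_id))).aestronglyMeasurable
    refine (intervalIntegral.hasDerivAt_integral_of_dominated_loc_of_deriv_le
      (F := fun x s => Φ s (g (x - s))) (F' := fun x s => Φ s (deriv g (x - s)))
      (bound := fun _ => C1 * C2) (Metric.ball_mem_nhds t₀ (by norm_num : (0:ℝ) < 1))
      (Filter.Eventually.of_forall hmeas)
      ((hΦ.clm_apply (hg.comp (continuous_const.sub continuous_id))).intervalIntegrable _ _)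
      (hmeas' t₀) ?_ (intervalIntegrable_const) ?_).2
    · refine Filter.Eventually.of_forall ?_
      intro s hs x hx
      calc ‖Φ s (deriv g (x - s))‖ ≤ ‖Φ s‖ * ‖deriv g (x - s)‖ := (Φ s).le_opNorm _
        _ ≤ C1 * C2 := mul_le_mul (hC1 s (Set.uIoc_subset_uIcc hs))
            (hC2 _ (memIcc x hx s hs)) (norm_nonneg _) hC1'
    · refine Filter.Eventually.of_forall ?_
      intro s hs x hx
      have inner : HasDerivAt (fun x => g (x - s)) (deriv g (x - s)) x := by
        simpa [Function.comp_def] using ((hgd (x - s)).hasDerivAt).scomp x ((hasDerivAt_id x).sub_const s)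
      exact (Φ s).hasFDerivAt.comp_hasDerivAt x inner
  -- identify the integral
  have hτA : t₀ ≤ A := by rw [hA]; linarith
  rw [← extend_conv Φ hΦ (deriv g) hg' hε (vanish_deriv h0) hτA] at key
  -- transfer derivative along local equality
  have hev : (fun t => ∫ s in (0:ℝ)..t, Φ s (g (t - s)))
      =ᶠ[nhds t₀] (fun t => ∫ s in (0:ℝ)..A, Φ s (g (t - s))) := by
    refine Filter.eventuallyEq_of_mem (Iio_mem_nhds (show t₀ < A by rw [hA]; linarith)) ?_
    intro t ht
    exact extend_conv Φ hΦ g hg hε h0 (le_of_lt ht)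
  exact key.congr_of_eventuallyEq hev


end realspace

end Stmt2Aux

open scoped ContDiff in
/-- For every `f ∈ M`, the wave `u^f` is twice continuously differentiable on
`[0,∞)`, `u^f(t) ∈ dom L₀*` for all `t ≥ 0`, `(u^f)''(t) + L₀*u^f(t) = 0` for all `t ≥ 0`,
`u^f(0) = (u^f)'(0) = 0`, and `Γ₁u^f(t) = f(t)` for all `t ≥ 0`: `u^f` is a classical solution
of the dynamical system with boundary control determined by `L₀`. -/
theorem stmt2 (L₀ L : H →ₗ.[ℂ] H) (T : H →L[ℂ] H) (K : Submodule ℂ H)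
    [Submodule.HasOrthogonalProjection K] (hs : Setting L₀ L T K)
    (f : ℝ → H) (hf : IsSmoothControl K f) :
    ContDiffOn ℝ 2 (wave T f) (Set.Ici 0) ∧
    wave T f 0 = 0 ∧ deriv (wave T f) 0 = 0 ∧
    ∀ t : ℝ, 0 ≤ t → ∃ ht : wave T f t ∈ L₀.adjoint.domain,
      deriv (deriv (wave T f)) t + L₀.adjoint ⟨wave T f t, ht⟩ = 0 ∧
      T (L₀.adjoint ⟨wave T f t, ht⟩) - wave T f t = f t :=
  by
  classical
  obtain ⟨hsm, hK, ε, hε, hf0⟩ := hf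
  have hT := hs.T_selfadjoint
  have hspec : ∀ x ∈ spectrum ℝ T, (0:ℝ) ≤ x := by
    have h1 : T.IsPositive := ⟨hT.isSymmetric, fun x => hs.T_positive x⟩
    have h2 : 0 ≤ T := T.nonneg_iff_isPositive.mpr h1
    exact fun x hx => spectrum_nonneg_of_nonneg h2 hx
  -- smoothness chain
  have hsm' : ContDiff ℝ (∞ : WithTop ℕ∞) f := by exact_mod_cast hsm
  have h1 := contDiff_infty_iff_deriv.mp hsm'
  have h2 := contDiff_infty_iff_deriv.mp h1.2
  have h3 := contDiff_infty_iff_deriv.mp h2.2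
  have h4 := contDiff_infty_iff_deriv.mp h3.2
  have h5 := contDiff_infty_iff_deriv.mp h4.2
  set f2 : ℝ → H := deriv (deriv f) with hf2
  set f3 : ℝ → H := deriv f2 with hf3
  set f4 : ℝ → H := deriv f3 with hf4
  have hdf : Differentiable ℝ f := h1.1
  have hdf1 : Differentiable ℝ (deriv f) := h2.1
  have hdf2 : Differentiable ℝ f2 := h3.1
  have hdf3 : Differentiable ℝ f3 := h4.1
  have hdf4 : Differentiable ℝ f4 := h5.1
  have hcf3 : Continuous f3 := hdf3.continuous
  have hcf4 : Continuous f4 := hdf4.continuous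
  have hcf5 : Continuous (deriv f4) := (h5.2).continuous
  -- vanishing near 0
  have hv0 : ∀ r < ε, f r = 0 := fun r hr => hf0 r hr.le
  have hv1 : ∀ r < ε, deriv f r = 0 := Stmt2Aux.vanish_deriv hv0
  have hv2 : ∀ r < ε, f2 r = 0 := by rw [hf2]; exact Stmt2Aux.vanish_deriv hv1
  have hv3 : ∀ r < ε, f3 r = 0 := by rw [hf3]; exact Stmt2Aux.vanish_deriv hv2
  have hv4 : ∀ r < ε, f4 r = 0 := by rw [hf4]; exact Stmt2Aux.vanish_deriv hv3
  -- operator families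
  set Φ : ℝ → H →L[ℝ] H := Stmt2Aux.Iop T with hΦdef
  have hΦc : Continuous Φ := Stmt2Aux.Iop_continuous T hT
  set w : ℝ → H := fun t => ∫ s in (0:ℝ)..t, Φ (t - s) (f2 s) with hwdef
  set w1 : ℝ → H := fun t => ∫ s in (0:ℝ)..t, Φ (t - s) (f3 s) with hw1def
  set w2 : ℝ → H := fun t => ∫ s in (0:ℝ)..t, Φ (t - s) (f4 s) with hw2def
  have hswap : ∀ (g : ℝ → H) (t : ℝ), (∫ s in (0:ℝ)..t, Φ (t - s) (g s))
      = ∫ s in (0:ℝ)..t, Φ s (g (t - s)) := by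
    intro g t
    have := intervalIntegral.integral_comp_sub_left (a := (0:ℝ)) (b := t)
      (fun s => Φ s (g (t - s))) t
    simp only [sub_sub_cancel, sub_zero, sub_self] at this
    exact this
  have hwave : wave T f = fun t => -f t + w t := rfl
  -- derivatives of w
  have hwD : ∀ t, HasDerivAt w (w1 t) t := by
    intro t
    have h := Stmt2Aux.conv_hasDerivAt Φ hΦc f2 hdf2 (by rw [← hf3]; exact hcf3) hε hv2 t
    have e1 : (fun τ => ∫ s in (0:ℝ)..τ, Φ s (f2 (τ - s))) = w := funext fun τ => (hswap f2 τ).symm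
    rw [e1, ← hf3, ← hswap f3 t] at h
    exact h
  have hw1D : ∀ t, HasDerivAt w1 (w2 t) t := by
    intro t
    have h := Stmt2Aux.conv_hasDerivAt Φ hΦc f3 hdf3 (by rw [← hf4]; exact hcf4) hε hv3 t
    have e1 : (fun τ => ∫ s in (0:ℝ)..τ, Φ s (f3 (τ - s))) = w1 := funext fun τ => (hswap f3 τ).symm
    rw [e1, ← hf4, ← hswap f4 t] at h
    exact h
  have hw2D : ∀ t, HasDerivAt w2 (∫ s in (0:ℝ)..t, Φ (t - s) (deriv f4 s)) t := by
    intro t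
    have h := Stmt2Aux.conv_hasDerivAt Φ hΦc f4 hdf4 hcf5 hε hv4 t
    have e1 : (fun τ => ∫ s in (0:ℝ)..τ, Φ s (f4 (τ - s))) = w2 := funext fun τ => (hswap f4 τ).symm
    rw [e1, ← hswap (deriv f4) t] at h
    exact h
  have hw2c : Continuous w2 := continuous_iff_continuousAt.mpr fun t => (hw2D t).continuousAt
  -- derivatives of wave
  have hWd : ∀ t, HasDerivAt (wave T f) (-(deriv f t) + w1 t) t := fun t => by
    rw [hwave]; exact ((hdf t).hasDerivAt).neg.add (hwD t)
  have hDW : deriv (wave T f) = fun t => -(deriv f t) + w1 t := funext fun t => (hWd t).deriv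
  have hWdd : ∀ t, HasDerivAt (deriv (wave T f)) (-(f2 t) + w2 t) t := fun t => by
    rw [hDW]
    have hd2 : HasDerivAt (deriv f) (f2 t) t := by rw [hf2]; exact (hdf1 t).hasDerivAt
    exact hd2.neg.add (hw1D t)
  have hDDW : ∀ t, deriv (deriv (wave T f)) t = -(f2 t) + w2 t := fun t => (hWdd t).deriv
  -- continuity helpers
  have hcomp : ∀ (g : ℝ → H), Continuous g → ∀ (Ψ : ℝ → H →L[ℝ] H), Continuous Ψ → ∀ t : ℝ,
      Continuous (fun s => Ψ (t - s) (g s)) := fun g hg Ψ hΨ t =>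
    (hΨ.comp (continuous_const.sub continuous_id)).clm_apply hg
  have hJc : Continuous (Stmt2Aux.Jop T) :=
    continuous_iff_continuousAt.mpr fun r => (Stmt2Aux.Jop_hasDerivAt T hT r).continuousAt
  have hJdc : Continuous (Stmt2Aux.Jd T) :=
    continuous_iff_continuousAt.mpr fun r => (Stmt2Aux.Jd_hasDerivAt T hT r).continuousAt
  -- the key identity : T (f2 t - w2 t) = w t
  have key : ∀ t : ℝ, T (f2 t - w2 t) = w t := by
    intro t
    -- integration by parts no. 2 : w t + ∫ Jd (t-s) (f3 s) = T (f2 t)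
    have hG2 : ∀ s : ℝ, HasDerivAt (fun s => Stmt2Aux.Jd T (t - s) (f2 s))
        (Φ (t - s) (f2 s) + Stmt2Aux.Jd T (t - s) (f3 s)) s := by
      intro s
      have hA : HasDerivAt (fun s => Stmt2Aux.Jd T (t - s)) (Φ (t - s)) s := by
        have h0 := (Stmt2Aux.Jd_hasDerivAt T hT (t - s)).scomp s ((hasDerivAt_id s).const_sub t)
        simpa [hΦdef, Function.comp_def] using h0
      have hv : HasDerivAt f2 (f3 s) s := by rw [hf3]; exact (hdf2 s).hasDerivAt
      exact hA.clm_apply hv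
    have hi2a : IntervalIntegrable (fun s => Φ (t - s) (f2 s)) MeasureTheory.volume 0 t :=
      (hcomp f2 hdf2.continuous Φ hΦc t).intervalIntegrable _ _
    have hi2b : IntervalIntegrable (fun s => Stmt2Aux.Jd T (t - s) (f3 s)) MeasureTheory.volume 0 t :=
      (hcomp f3 hcf3 (Stmt2Aux.Jd T) hJdc t).intervalIntegrable _ _
    have hftc2 := intervalIntegral.integral_eq_sub_of_hasDerivAt (fun s _ => hG2 s) (hi2a.add hi2b)
    rw [intervalIntegral.integral_add hi2a hi2b] at hftc2
    have hend2 : Stmt2Aux.Jd T (t - t) (f2 t) - Stmt2Aux.Jd T (t - 0) (f2 0) = T (f2 t) := by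
      rw [sub_self, sub_zero, Stmt2Aux.Jd_zero T hT, hv2 0 hε]
      simp
    rw [hend2] at hftc2
    -- integration by parts no. 1 : ∫ Jop (t-s) (f4 s) = ∫ Jd (t-s) (f3 s)
    have hG1 : ∀ s : ℝ, HasDerivAt (fun s => Stmt2Aux.Jop T (t - s) (f3 s))
        (-(Stmt2Aux.Jd T (t - s) (f3 s)) + Stmt2Aux.Jop T (t - s) (f4 s)) s := by
      intro s
      have hA : HasDerivAt (fun s => Stmt2Aux.Jop T (t - s)) (-(Stmt2Aux.Jd T (t - s))) s := by
        have h0 := (Stmt2Aux.Jop_hasDerivAt T hT (t - s)).scomp s ((hasDerivAt_id s).const_sub t)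
        simpa [Function.comp_def] using h0
      have hv : HasDerivAt f3 (f4 s) s := by rw [hf4]; exact (hdf3 s).hasDerivAt
      have := hA.clm_apply hv
      simpa using this
    have hi1a : IntervalIntegrable (fun s => -(Stmt2Aux.Jd T (t - s) (f3 s)))
        MeasureTheory.volume 0 t := hi2b.neg
    have hi1b : IntervalIntegrable (fun s => Stmt2Aux.Jop T (t - s) (f4 s))
        MeasureTheory.volume 0 t := (hcomp f4 hcf4 (Stmt2Aux.Jop T) hJc t).intervalIntegrable _ _
    have hftc1 := intervalIntegral.integral_eq_sub_of_hasDerivAt (fun s _ => hG1 s) (hi1a.add hi1b)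
    rw [intervalIntegral.integral_add hi1a hi1b, intervalIntegral.integral_neg] at hftc1
    have hend1 : Stmt2Aux.Jop T (t - t) (f3 t) - Stmt2Aux.Jop T (t - 0) (f3 0) = 0 := by
      rw [sub_self, sub_zero, Stmt2Aux.Jop_zero T hT, hv3 0 hε]
      simp
    rw [hend1] at hftc1
    -- T (w2 t) = ∫ Jop (t-s) (f4 s)
    have hTw2 : T (w2 t) = ∫ s in (0:ℝ)..t, Stmt2Aux.Jop T (t - s) (f4 s) := by
      have hcomm := (T.restrictScalars ℝ).intervalIntegral_comp_comm
        ((hcomp f4 hcf4 Φ hΦc t).intervalIntegrable (μ := MeasureTheory.volume) 0 t)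
      have e1 : T (w2 t) = ∫ s in (0:ℝ)..t, (T.restrictScalars ℝ) (Φ (t - s) (f4 s)) := by
        rw [hw2def]
        exact hcomm.symm
      rw [e1]
      refine intervalIntegral.integral_congr fun s _ => ?_
      show T (Φ (t - s) (f4 s)) = _
      rw [hΦdef]
      exact Stmt2Aux.T_Iop T hT hspec (t - s) (f4 s)
    have hTw2' : T (w2 t) = T (f2 t) - w t := by
      rw [neg_add_eq_zero] at hftc1
      have hwt : (∫ s in (0:ℝ)..t, Φ (t - s) (f2 s)) = w t := by rw [hwdef]
      rw [hwt] at hftc2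
      rw [hTw2, ← hftc1]
      exact eq_sub_of_add_eq' hftc2
    rw [map_sub, hTw2']
    abel
  -- final assembly
  refine ⟨?_, ?_, ?_, ?_⟩
  · have hcd2 : ContDiff ℝ 2 (wave T f) := by
      rw [hwave]
      have hle : (2 : WithTop ℕ∞) ≤ ((⊤ : ℕ∞) : WithTop ℕ∞) := by
        rw [show ((2:WithTop ℕ∞)) = ((2:ℕ∞):WithTop ℕ∞) from rfl]
        exact WithTop.coe_le_coe.mpr le_top
      have hcw : ContDiff ℝ 2 w := by
        rw [show (2 : WithTop ℕ∞) = 1 + 1 from by norm_num]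
        refine contDiff_succ_iff_deriv.mpr ⟨fun t => (hwD t).differentiableAt, by simp, ?_⟩
        rw [funext fun t => (hwD t).deriv]
        exact contDiff_one_iff_deriv.mpr
          ⟨fun t => (hw1D t).differentiableAt, by rw [funext fun t => (hw1D t).deriv]; exact hw2c⟩
      exact ((hsm.of_le hle).neg).add hcw
    exact hcd2.contDiffOn
  · rw [hwave]
    show -f 0 + w 0 = 0
    rw [hwdef]
    simp [intervalIntegral.integral_same, hf0 0 hε.le]
  · rw [hDW]
    show -(deriv f 0) + w1 0 = 0
    rw [hv1 0 hε, hw1def]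
    simp [intervalIntegral.integral_same]
  · intro t _
    obtain ⟨hfd, hfv⟩ := (hs.kernel (f t)).mp (hK t)
    have hTy : T (f2 t - w2 t) = w t := key t
    have hwL : w t ∈ L.domain := hTy ▸ hs.T_mem_domain (f2 t - w2 t)
    have hwAdj : w t ∈ L₀.adjoint.domain := hs.le_adjoint.1 hwL
    have hdom : wave T f t ∈ L₀.adjoint.domain := by
      rw [hwave]
      exact add_mem (neg_mem hfd) hwAdj
    refine ⟨hdom, ?_, ?_⟩
    · have hval : L₀.adjoint ⟨wave T f t, hdom⟩ = f2 t - w2 t := by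
        have hsplit : (⟨wave T f t, hdom⟩ : L₀.adjoint.domain)
            = -(⟨f t, hfd⟩ : L₀.adjoint.domain) + ⟨w t, hwAdj⟩ := by
          apply Subtype.ext
          show wave T f t = -(f t) + w t
          rw [hwave]
        rw [hsplit, LinearPMap.map_add, LinearPMap.map_neg, hfv, neg_zero, zero_add]
        have hle2 : L ⟨w t, hwL⟩ = L₀.adjoint ⟨w t, hwAdj⟩ := hs.le_adjoint.2 rfl
        rw [← hle2]
        have hsub : (⟨w t, hwL⟩ : L.domain)
            = ⟨T (f2 t - w2 t), hs.T_mem_domain (f2 t - w2 t)⟩ := Subtype.ext hTy.symm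
        rw [hsub, hs.T_inv_right (f2 t - w2 t)]
      rw [hval, hDDW t]
      abel
    · have hval : L₀.adjoint ⟨wave T f t, hdom⟩ = f2 t - w2 t := by
        have hsplit : (⟨wave T f t, hdom⟩ : L₀.adjoint.domain)
            = -(⟨f t, hfd⟩ : L₀.adjoint.domain) + ⟨w t, hwAdj⟩ := by
          apply Subtype.ext
          show wave T f t = -(f t) + w t
          rw [hwave]
        rw [hsplit, LinearPMap.map_add, LinearPMap.map_neg, hfv, neg_zero, zero_add]
        have hle2 : L ⟨w t, hwL⟩ = L₀.adjoint ⟨w t, hwAdj⟩ := hs.le_adjoint.2 rfl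
        rw [← hle2]
        have hsub : (⟨w t, hwL⟩ : L.domain)
            = ⟨T (f2 t - w2 t), hs.T_mem_domain (f2 t - w2 t)⟩ := Subtype.ext hTy.symm
        rw [hsub, hs.T_inv_right (f2 t - w2 t)]
      rw [hval, hTy, hwave]
      show w t - (-(f t) + w t) = f t
      abel
end

section
/- For every f ∈ M and t ≥ 0, u^f(t) = −f(t) + ∫₀ᵗ k_{t−s}(T) f'''(s) ds, where for τ ∈ ℝ, k_τ : [0,∞) → ℝ is the continuous function k_τ(x) := x(1 − cos(τ/√x)) for x > 0, k_τ(0) := 0, and k_τ(T) is the bounded operator obtained from T by the continuous functional calculus (formally k_τ(T) = L^{−1}(I − cos(τL^{1/2}))). Moreover, the summand ∫₀ᵗ k_{t−s}(T) f'''(s) ds belongs to dom L. -/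
open MeasureTheory
open scoped ComplexInnerProductSpace

variable {H : Type*} [NormedAddCommGroup H] [InnerProductSpace ℂ H] [CompleteSpace H]

/-- `k_τ(T) = L⁻¹(I − cos(τ·L^{1/2}))`, realized by applying the continuous functional calculus
of `T = L⁻¹` to the continuous function `k_τ(x) = x·(1 − cos(τ/√x))` (for `x > 0`, extended by
`0` at `x ≤ 0`). -/
noncomputable def cosOp (T : H →L[ℂ] H) (τ : ℝ) : H →L[ℂ] H :=
  cfc (fun x : ℝ => if 0 < x then x * (1 - Real.cos (τ / Real.sqrt x)) else 0) T


-- ===================== auxiliary material for Statement 3 =====================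

noncomputable section Stmt3Aux

/-- pointwise function of `waveOp`. -/
def wFun (τ x : ℝ) : ℝ := if 0 < x then Real.sqrt x * Real.sin (τ / Real.sqrt x) else 0

/-- pointwise function of `cosOp`. -/
def kFun (τ x : ℝ) : ℝ := if 0 < x then x * (1 - Real.cos (τ / Real.sqrt x)) else 0

/-- pointwise antiderivative of `kFun` in `τ`. -/
def KFun (τ x : ℝ) : ℝ :=
  if 0 < x then x * τ - x * (Real.sqrt x * Real.sin (τ / Real.sqrt x)) else 0

lemma kFun_zero (x : ℝ) : kFun 0 x = 0 := by
  simp [kFun]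

lemma KFun_zero (x : ℝ) : KFun 0 x = 0 := by
  simp [KFun]

lemma abs_wFun_le (τ x : ℝ) : |wFun τ x| ≤ Real.sqrt |x| := by
  unfold wFun
  split_ifs with hx
  · rw [abs_of_pos hx, abs_mul, abs_of_nonneg (Real.sqrt_nonneg x)]
    calc Real.sqrt x * |Real.sin (τ / Real.sqrt x)| ≤ Real.sqrt x * 1 := by
          exact mul_le_mul_of_nonneg_left (Real.abs_sin_le_one _) (Real.sqrt_nonneg x)
      _ = Real.sqrt x := mul_one _
  · simpa using Real.sqrt_nonneg |x|

/-- Continuity helper for piecewise functions vanishing at `0`. -/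
lemma continuous_piece {g bnd : ℝ → ℝ} (hg : ∀ x ∈ Set.Ioi (0:ℝ), ContinuousAt g x)
    (hbnd : Continuous bnd) (hbnd0 : bnd 0 = 0) (hle : ∀ x, 0 < x → |g x| ≤ bnd x) :
    Continuous (fun x => if 0 < x then g x else 0) := by
  rw [continuous_iff_continuousAt]
  intro x₀
  rcases lt_trichotomy x₀ 0 with h | h | h
  · have hev : (fun x => if 0 < x then g x else 0) =ᶠ[nhds x₀] fun _ => 0 := by
      filter_upwards [Iio_mem_nhds h] with x hx
      exact if_neg (not_lt.mpr (le_of_lt (Set.mem_Iio.mp hx)))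
    exact continuousAt_const.congr hev.symm
  · subst h
    have h0 : (if (0:ℝ) < 0 then g 0 else 0) = 0 := by simp
    have : Filter.Tendsto (fun x => if 0 < x then g x else 0) (nhds 0) (nhds 0) := by
      apply squeeze_zero_norm (a := fun x => |bnd x|)
      · intro x
        by_cases hx : 0 < x
        · simp only [if_pos hx, Real.norm_eq_abs]
          exact (hle x hx).trans (le_abs_self _)
        · simp [if_neg hx, abs_nonneg]
      · have : Filter.Tendsto (fun x => |bnd x|) (nhds 0) (nhds |bnd 0|) :=
          (continuous_abs.comp hbnd).tendsto 0
        simpa [hbnd0] using this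
    unfold ContinuousAt
    simp only [h0] at this ⊢
    convert this using 2
    try simp
  · have hev : (fun x => if 0 < x then g x else 0) =ᶠ[nhds x₀] g := by
      filter_upwards [Ioi_mem_nhds h] with x hx
      exact if_pos (Set.mem_Ioi.mp hx)
    exact ((hg x₀ h).congr hev.symm).congr (by rfl)

lemma continuousAt_aux₁ (τ : ℝ) {x : ℝ} (hx : 0 < x) :
    ContinuousAt (fun x => Real.sqrt x * Real.sin (τ / Real.sqrt x)) x := by
  have hs : ContinuousAt Real.sqrt x := Real.continuous_sqrt.continuousAt
  have hne : Real.sqrt x ≠ 0 := ne_of_gt (Real.sqrt_pos.mpr hx)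
  exact hs.mul ((Real.continuous_sin.continuousAt).comp (continuousAt_const.div hs hne))

lemma continuous_wFun (τ : ℝ) : Continuous (wFun τ) := by
  apply continuous_piece (bnd := fun x => Real.sqrt |x|)
  · exact fun x hx => continuousAt_aux₁ τ hx
  · exact Real.continuous_sqrt.comp continuous_abs
  · simp
  · intro x hx
    have := abs_wFun_le τ x
    rwa [wFun, if_pos hx] at this

lemma continuous_kFun (τ : ℝ) : Continuous (kFun τ) := by
  apply continuous_piece (bnd := fun x => 2 * |x|)
  · intro x hx
    have hs : ContinuousAt Real.sqrt x := Real.continuous_sqrt.continuousAt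
    have hne : Real.sqrt x ≠ 0 := ne_of_gt (Real.sqrt_pos.mpr hx)
    exact continuousAt_id.mul (continuousAt_const.sub
      ((Real.continuous_cos.continuousAt).comp (continuousAt_const.div hs hne)))
  · exact continuous_const.mul continuous_abs
  · simp
  · intro x hx
    have h2 : |1 - Real.cos (τ / Real.sqrt x)| ≤ 2 := by
      calc |1 - Real.cos (τ / Real.sqrt x)| ≤ |(1:ℝ)| + |Real.cos (τ / Real.sqrt x)| :=
            abs_sub _ _
        _ ≤ 1 + 1 := by
            simp [Real.abs_cos_le_one]
        _ = 2 := by norm_num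
    calc |x * (1 - Real.cos (τ / Real.sqrt x))| = x * |1 - Real.cos (τ / Real.sqrt x)| := by
          rw [abs_mul, abs_of_pos hx]
      _ ≤ x * 2 := mul_le_mul_of_nonneg_left h2 (le_of_lt hx)
      _ = 2 * |x| := by rw [abs_of_pos hx]; ring

lemma continuous_KFun (τ : ℝ) : Continuous (KFun τ) := by
  apply continuous_piece (bnd := fun x => |x| * |τ| + |x| * Real.sqrt |x|)
  · intro x hx
    exact (continuousAt_id.mul continuousAt_const).sub
      (continuousAt_id.mul (continuousAt_aux₁ τ hx))
  · exact (continuous_abs.mul continuous_const).add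
      (continuous_abs.mul (Real.continuous_sqrt.comp continuous_abs))
  · simp
  · intro x hx
    calc |x * τ - x * (Real.sqrt x * Real.sin (τ / Real.sqrt x))|
        ≤ |x * τ| + |x * (Real.sqrt x * Real.sin (τ / Real.sqrt x))| := abs_sub _ _
      _ ≤ |x| * |τ| + |x| * Real.sqrt |x| := by
          rw [abs_mul, abs_mul]
          gcongr
          · have := abs_wFun_le τ x
            rwa [wFun, if_pos hx] at this

/-- First-order: a function with derivative bounded by `C` is `C`-Lipschitz. -/
lemma lip_of_deriv_bound {φ φ' : ℝ → ℝ} {C : ℝ}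
    (h1 : ∀ τ, HasDerivAt φ (φ' τ) τ) (hb : ∀ τ, |φ' τ| ≤ C) (a b : ℝ) :
    |φ b - φ a| ≤ C * |b - a| := by
  have := Convex.norm_image_sub_le_of_norm_hasDerivWithin_le (𝕜 := ℝ)
    (f := φ) (f' := φ') (s := Set.univ)
    (fun x _ => (h1 x).hasDerivWithinAt) (fun x _ => hb x) convex_univ
    (Set.mem_univ a) (Set.mem_univ b)
  simpa [Real.norm_eq_abs] using this

/-- Second-order Taylor bound with globally bounded second derivative. -/
lemma taylor2 {φ φ' φ'' : ℝ → ℝ} {C : ℝ}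
    (h1 : ∀ τ, HasDerivAt φ (φ' τ) τ) (h2 : ∀ τ, HasDerivAt φ' (φ'' τ) τ)
    (hb : ∀ τ, |φ'' τ| ≤ C) (a h : ℝ) :
    |φ (a + h) - φ a - h * φ' a| ≤ C * h ^ 2 := by
  have hC : 0 ≤ C := le_trans (abs_nonneg _) (hb a)
  set g : ℝ → ℝ := fun τ => φ τ - φ' a * τ with hg
  have hg1 : ∀ τ, HasDerivAt g (φ' τ - φ' a) τ := by
    intro τ
    have h := (h1 τ).sub ((hasDerivAt_id τ).const_mul (φ' a))
    rw [mul_one] at h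
    exact h
  have hlip : ∀ τ, |φ' τ - φ' a| ≤ C * |τ - a| := fun τ => lip_of_deriv_bound h2 hb a τ
  have key := Convex.norm_image_sub_le_of_norm_hasDerivWithin_le (𝕜 := ℝ)
    (f := g) (f' := fun τ => φ' τ - φ' a) (s := Set.uIcc a (a + h))
    (fun x _ => (hg1 x).hasDerivWithinAt)
    (fun x hx => by
      have h1' : |x - a| ≤ |h| := by
        rcases le_total 0 h with hh | hh
        · rw [Set.uIcc_of_le (by linarith)] at hx
          obtain ⟨hx1, hx2⟩ := hx
          rw [abs_of_nonneg (by linarith), abs_of_nonneg hh]; linarith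
        · rw [Set.uIcc_of_ge (by linarith)] at hx
          obtain ⟨hx1, hx2⟩ := hx
          rw [abs_of_nonpos (by linarith), abs_of_nonpos hh]; linarith
      calc ‖φ' x - φ' a‖ ≤ C * |x - a| := hlip x
        _ ≤ C * |h| := by gcongr
      )
    (convex_uIcc _ _) Set.left_mem_uIcc Set.right_mem_uIcc
  have : |g (a + h) - g a| ≤ (C * |h|) * |h| := by
    simpa [Real.norm_eq_abs, add_sub_cancel_left] using key
  calc |φ (a + h) - φ a - h * φ' a| = |g (a + h) - g a| := by
        rw [hg]; ring_nf
    _ ≤ (C * |h|) * |h| := this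
    _ = C * h ^ 2 := by rw [mul_assoc, abs_mul_abs_self]; ring

section PointwiseDerivs

lemma hasDerivAt_inner (τ : ℝ) {x : ℝ} (hx : 0 < x) :
    HasDerivAt (fun τ : ℝ => τ / Real.sqrt x) (1 / Real.sqrt x) τ := by
  simpa using (hasDerivAt_id τ).div_const (Real.sqrt x)

lemma hasDerivAt_wFun (τ : ℝ) {x : ℝ} (hx : 0 < x) :
    HasDerivAt (fun σ => wFun σ x) (Real.cos (τ / Real.sqrt x)) τ := by
  have h1 : HasDerivAt (fun σ : ℝ => Real.sin (σ / Real.sqrt x))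
      (Real.cos (τ / Real.sqrt x) * (1 / Real.sqrt x)) τ :=
    (Real.hasDerivAt_sin _).comp τ (hasDerivAt_inner τ hx)
  have h2 := h1.const_mul (Real.sqrt x)
  have : Real.sqrt x * (Real.cos (τ / Real.sqrt x) * (1 / Real.sqrt x))
      = Real.cos (τ / Real.sqrt x) := by
    have hne : Real.sqrt x ≠ 0 := ne_of_gt (Real.sqrt_pos.mpr hx)
    field_simp
  rw [this] at h2
  refine h2.congr_of_eventuallyEq ?_
  filter_upwards with σ
  simp [wFun, hx]

lemma hasDerivAt_kFun (τ : ℝ) {x : ℝ} (hx : 0 < x) :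
    HasDerivAt (fun σ => kFun σ x) (wFun τ x) τ := by
  have h1 : HasDerivAt (fun σ : ℝ => Real.cos (σ / Real.sqrt x))
      (-Real.sin (τ / Real.sqrt x) * (1 / Real.sqrt x)) τ :=
    (Real.hasDerivAt_cos _).comp τ (hasDerivAt_inner τ hx)
  have h2 := ((hasDerivAt_const τ (1:ℝ)).sub h1).const_mul x
  have : x * (0 - -Real.sin (τ / Real.sqrt x) * (1 / Real.sqrt x)) = wFun τ x := by
    rw [wFun, if_pos hx]
    have hne : Real.sqrt x ≠ 0 := ne_of_gt (Real.sqrt_pos.mpr hx)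
    field_simp
    rw [Real.sq_sqrt hx.le]; ring
  rw [this] at h2
  refine h2.congr_of_eventuallyEq ?_
  filter_upwards with σ
  simp [kFun, hx]

lemma hasDerivAt_KFun (τ : ℝ) {x : ℝ} (hx : 0 < x) :
    HasDerivAt (fun σ => KFun σ x) (kFun τ x) τ := by
  have h1 : HasDerivAt (fun σ : ℝ => Real.sin (σ / Real.sqrt x))
      (Real.cos (τ / Real.sqrt x) * (1 / Real.sqrt x)) τ :=
    (Real.hasDerivAt_sin _).comp τ (hasDerivAt_inner τ hx)
  have h2 := ((hasDerivAt_id τ).const_mul x).sub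
    ((h1.const_mul (Real.sqrt x)).const_mul x)
  have : x * 1 - x * (Real.sqrt x * (Real.cos (τ / Real.sqrt x) * (1 / Real.sqrt x)))
      = kFun τ x := by
    rw [kFun, if_pos hx]
    have hne : Real.sqrt x ≠ 0 := ne_of_gt (Real.sqrt_pos.mpr hx)
    field_simp
  rw [this] at h2
  refine h2.congr_of_eventuallyEq ?_
  filter_upwards with σ
  simp [KFun, hx]

end PointwiseDerivs

/-- Lipschitz bound for `wFun` in `τ`. -/
lemma wFun_lip (x a b : ℝ) : |wFun b x - wFun a x| ≤ |b - a| := by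
  by_cases hx : 0 < x
  · have := lip_of_deriv_bound (φ := fun σ => wFun σ x)
      (φ' := fun σ => Real.cos (σ / Real.sqrt x)) (C := 1)
      (fun τ => hasDerivAt_wFun τ hx) (fun τ => Real.abs_cos_le_one _) a b
    simpa using this
  · simp [wFun, hx, abs_nonneg]

/-- Taylor bound for `kFun` in `τ`. -/
lemma kFun_taylor (x a h : ℝ) : |kFun (a + h) x - kFun a x - h * wFun a x| ≤ 1 * h ^ 2 := by
  by_cases hx : 0 < x
  · exact taylor2 (φ := fun σ => kFun σ x) (φ' := fun σ => wFun σ x)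
      (φ'' := fun σ => Real.cos (σ / Real.sqrt x))
      (fun τ => hasDerivAt_kFun τ hx) (fun τ => hasDerivAt_wFun τ hx)
      (fun τ => Real.abs_cos_le_one _) a h
  · simp [kFun, wFun, hx, sq_nonneg]

/-- Taylor bound for `KFun` in `τ`. -/
lemma KFun_taylor (x a h : ℝ) :
    |KFun (a + h) x - KFun a x - h * kFun a x| ≤ Real.sqrt |x| * h ^ 2 := by
  by_cases hx : 0 < x
  · exact taylor2 (φ := fun σ => KFun σ x) (φ' := fun σ => kFun σ x)
      (φ'' := fun σ => wFun σ x)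
      (fun τ => hasDerivAt_KFun τ hx) (fun τ => hasDerivAt_kFun τ hx)
      (fun τ => abs_wFun_le τ x) a h
  · have : Real.sqrt |x| * h ^ 2 ≥ 0 := mul_nonneg (Real.sqrt_nonneg _) (sq_nonneg _)
    simp only [KFun, kFun, if_neg hx]
    simpa using this

end Stmt3Aux

section Stmt3OpAux

variable (T : H →L[ℂ] H)

/-- generic derivative lemma for a `cfc` family with uniform Taylor bound on the spectrum -/
lemma hasDerivAt_cfc_family (hT : IsSelfAdjoint T)
    (φ : ℝ → ℝ → ℝ) (ψ : ℝ → ℝ) (τ : ℝ) (C : ℝ) (hC : 0 ≤ C)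
    (hφ : ∀ σ, Continuous (φ σ)) (hψ : Continuous ψ)
    (hb : ∀ h x, x ∈ spectrum ℝ T → |φ (τ + h) x - φ τ x - h * ψ x| ≤ C * h ^ 2) :
    HasDerivAt (fun σ => cfc (φ σ) T) (cfc ψ T) τ := by
  rw [hasDerivAt_iff_isLittleO]
  have key : ∀ σ : ℝ, ‖cfc (φ σ) T - cfc (φ τ) T - (σ - τ) • cfc ψ T‖ ≤ C * (σ - τ) ^ 2 := by
    intro σ
    have e1 : cfc (φ σ) T - cfc (φ τ) T - (σ - τ) • cfc ψ T
        = cfc (fun x => φ σ x - φ τ x - (σ - τ) * ψ x) T := by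
      rw [cfc_sub (fun x => φ σ x - φ τ x) (fun x => (σ - τ) * ψ x) T
          (((hφ σ).sub (hφ τ)).continuousOn) ((continuous_const.mul hψ).continuousOn),
        cfc_sub (φ σ) (φ τ) T ((hφ σ).continuousOn) ((hφ τ).continuousOn),
        cfc_const_mul (σ - τ) ψ T hψ.continuousOn]
    rw [e1]
    apply norm_cfc_le (by positivity)
    intro x hx
    have := hb (σ - τ) x hx
    rw [Real.norm_eq_abs]
    calc |φ σ x - φ τ x - (σ - τ) * ψ x|
        = |φ (τ + (σ - τ)) x - φ τ x - (σ - τ) * ψ x| := by ring_nf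
      _ ≤ C * (σ - τ) ^ 2 := this
  have big : (fun σ => cfc (φ σ) T - cfc (φ τ) T - (σ - τ) • cfc ψ T)
      =O[nhds τ] (fun σ => (σ - τ) ^ 2) :=
    Asymptotics.IsBigO.of_bound C <| Filter.Eventually.of_forall fun σ => by
      simpa [Real.norm_eq_abs, sq_abs] using key σ
  have small : (fun σ : ℝ => (σ - τ) ^ 2) =o[nhds τ] (fun σ => σ - τ) := by
    have h1 : (fun σ : ℝ => σ - τ) =o[nhds τ] (fun _ => (1 : ℝ)) := by
      rw [Asymptotics.isLittleO_one_iff]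
      have : Filter.Tendsto (fun σ : ℝ => σ - τ) (nhds τ) (nhds (τ - τ)) :=
        (continuous_id.sub continuous_const).tendsto τ
      simpa using this
    have h2 := h1.mul_isBigO (Asymptotics.isBigO_refl (fun σ : ℝ => σ - τ) (nhds τ))
    refine h2.congr (fun x => by ring) (fun x => by ring)
  exact big.trans_isLittleO small

lemma spectrum_nonneg_of (hT : IsSelfAdjoint T) (hpos : ∀ x : H, 0 ≤ (⟪T x, x⟫).re) :
    ∀ x ∈ spectrum ℝ T, (0:ℝ) ≤ x := by
  have hTpos : T.IsPositive := by
    refine ⟨hT.isSymmetric, fun x => ?_⟩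
    exact hpos x
  have h0 : (0 : H →L[ℂ] H) ≤ T := (ContinuousLinearMap.nonneg_iff_isPositive T).mpr hTpos
  exact fun x hx => spectrum_nonneg_of_nonneg h0 hx

/-- `cosOp` family is differentiable with derivative `waveOp`. -/
lemma hasDerivAt_kOp (hT : IsSelfAdjoint T) (τ : ℝ) :
    HasDerivAt (fun σ => cfc (kFun σ) T) (cfc (wFun τ) T) τ :=
  hasDerivAt_cfc_family T hT kFun (wFun τ) τ 1 zero_le_one continuous_kFun
    (continuous_wFun τ) (fun h x _ => kFun_taylor x τ h)

lemma hasDerivAt_KOp (hT : IsSelfAdjoint T) (τ : ℝ) :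
    HasDerivAt (fun σ => cfc (KFun σ) T) (cfc (kFun τ) T) τ := by
  obtain ⟨M, hM⟩ := (Metric.isBounded_iff_subset_closedBall 0).mp
    (spectrum.isBounded (𝕜 := ℝ) T)
  apply hasDerivAt_cfc_family T hT KFun (kFun τ) τ (Real.sqrt (max M 0)) (Real.sqrt_nonneg _)
    continuous_KFun (continuous_kFun τ)
  intro h x hx
  refine (KFun_taylor x τ h).trans ?_
  have hxM : |x| ≤ max M 0 := by
    have := hM hx
    rw [Metric.mem_closedBall, Real.dist_eq, sub_zero] at this
    exact this.trans (le_max_left _ _)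
  have : Real.sqrt |x| ≤ Real.sqrt (max M 0) := Real.sqrt_le_sqrt hxM
  exact mul_le_mul_of_nonneg_right this (sq_nonneg h)

lemma continuous_wOp (hT : IsSelfAdjoint T) : Continuous (fun τ => cfc (wFun τ) T) := by
  have : LipschitzWith 1 (fun τ => cfc (wFun τ) T) := by
    apply LipschitzWith.of_dist_le_mul
    intro a b
    rw [dist_eq_norm, NNReal.coe_one, one_mul]
    have e1 : cfc (wFun a) T - cfc (wFun b) T = cfc (fun x => wFun a x - wFun b x) T := by
      rw [cfc_sub (wFun a) (wFun b) T ((continuous_wFun a).continuousOn)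
        ((continuous_wFun b).continuousOn)]
    rw [e1]
    apply norm_cfc_le (abs_nonneg _)
    intro x _
    rw [Real.norm_eq_abs, ← Real.dist_eq, Real.dist_eq]
    exact wFun_lip x b a
  exact this.continuous

lemma kOp_zero : cfc (kFun 0) T = 0 := by
  have : kFun 0 = fun _ : ℝ => (0:ℝ) := funext kFun_zero
  rw [this]
  exact cfc_const_zero ℝ T

lemma KOp_zero : cfc (KFun 0) T = 0 := by
  have : KFun 0 = fun _ : ℝ => (0:ℝ) := funext KFun_zero
  rw [this]
  exact cfc_const_zero ℝ T

/-- factorization `K_τ(T) = T ∘ B_τ` -/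
lemma KOp_factor (hT : IsSelfAdjoint T) (hpos : ∀ x ∈ spectrum ℝ T, (0:ℝ) ≤ x) (τ : ℝ) :
    cfc (KFun τ) T = T ∘L cfc (fun x => τ - wFun τ x) T := by
  have h1 : cfc (KFun τ) T = cfc (fun x => x * (τ - wFun τ x)) T := by
    apply cfc_congr
    intro x hx
    rcases lt_or_eq_of_le (hpos x hx) with h | h
    · simp only [KFun, wFun, if_pos h]
      ring
    · simp [KFun, wFun, ← h]
  rw [h1, cfc_mul (fun x => x) (fun x => τ - wFun τ x) T continuous_id.continuousOn
    ((continuous_const.sub (continuous_wFun τ)).continuousOn), cfc_id' ℝ T]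
  rfl

/-- Generic integration by parts for operator-family kernels. -/
lemma ibp_kernel (A B : ℝ → H →L[ℝ] H) (hAB : ∀ τ, HasDerivAt B (A τ) τ)
    (hAcont : Continuous A) (hB0 : B 0 = 0)
    (g g' : ℝ → H) (hg : ∀ s, HasDerivAt g (g' s) s) (hg'c : Continuous g') (hg0 : g 0 = 0)
    (t : ℝ) :
    ∫ s in (0:ℝ)..t, A (t - s) (g s) = ∫ s in (0:ℝ)..t, B (t - s) (g' s) := by
  have hBc : Continuous B := by
    rw [continuous_iff_continuousAt]; exact fun τ => (hAB τ).continuousAt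
  have hgc : Continuous g := by
    rw [continuous_iff_continuousAt]; exact fun s => (hg s).continuousAt
  set F : ℝ → H := fun s => B (t - s) (g s) with hF
  have hFd : ∀ s, HasDerivAt F (B (t - s) (g' s) - A (t - s) (g s)) s := by
    intro s
    have h1 : HasDerivAt (fun s : ℝ => t - s) (-1) s := by
      simpa using (hasDerivAt_id s).const_sub t
    have h2 : HasDerivAt (fun s : ℝ => B (t - s)) ((-1 : ℝ) • A (t - s)) s :=
      HasDerivAt.scomp_of_eq (𝕜 := ℝ) (𝕜' := ℝ) (F := H →L[ℝ] H) s (hAB (t - s)) h1 rfl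
    have h3 := h2.clm_apply (hg s)
    have : ((-1 : ℝ) • A (t - s)) (g s) + B (t - s) (g' s)
        = B (t - s) (g' s) - A (t - s) (g s) := by
      simp [sub_eq_add_neg, add_comm]
    rwa [this] at h3
  have hcont1 : Continuous fun s => A (t - s) (g s) :=
    ((hAcont.comp (continuous_const.sub continuous_id)).clm_apply hgc)
  have hcont2 : Continuous fun s => B (t - s) (g' s) :=
    ((hBc.comp (continuous_const.sub continuous_id)).clm_apply hg'c)
  have hint : IntervalIntegrable (fun s => B (t - s) (g' s) - A (t - s) (g s))
      volume 0 t := (hcont2.sub hcont1).intervalIntegrable _ _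
  have key := intervalIntegral.integral_eq_sub_of_hasDerivAt (f := F)
    (f' := fun s => B (t - s) (g' s) - A (t - s) (g s))
    (fun s _ => hFd s) hint
  have hF0 : F 0 = 0 := by simp [hF, hg0]
  have hFt : F t = 0 := by simp [hF, hB0]
  rw [hFt, hF0, sub_zero] at key
  have key2 : (∫ s in (0:ℝ)..t, B (t - s) (g' s)) - ∫ s in (0:ℝ)..t, A (t - s) (g s) = 0 := by
    rw [← intervalIntegral.integral_sub (hcont2.intervalIntegrable 0 t)
      (hcont1.intervalIntegrable 0 t)]
    exact key
  have := sub_eq_zero.mp key2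
  rw [this]

end Stmt3OpAux

/-- For every `f ∈ M` and `t ≥ 0`,
`u^f(t) = −f(t) + ∫₀ᵗ k_{t−s}(T) f'''(s) ds`, and the integral summand belongs to `dom L`. -/
theorem stmt3 (L₀ L : H →ₗ.[ℂ] H) (T : H →L[ℂ] H) (K : Submodule ℂ H)
    [Submodule.HasOrthogonalProjection K] (hs : Setting L₀ L T K)
    (f : ℝ → H) (hf : IsSmoothControl K f) (t : ℝ) (ht : 0 ≤ t) :
    wave T f t = -f t + ∫ s in (0:ℝ)..t, cosOp T (t - s) (deriv (deriv (deriv f)) s) ∧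
    (∫ s in (0:ℝ)..t, cosOp T (t - s) (deriv (deriv (deriv f)) s)) ∈ L.domain := by
  obtain ⟨hfC, hfK, ε, hε, hf0⟩ := hf
  have hT : IsSelfAdjoint T := hs.T_selfadjoint
  set f2 := deriv (deriv f) with hf2def
  set f3 := deriv f2 with hf3def
  set f4 := deriv f3 with hf4def
  -- smoothness of iterated derivatives
  have hC2 : ContDiff ℝ (⊤ : ℕ∞) f2 := by
    have h := (hfC.iterate_deriv 2 : ContDiff ℝ (⊤ : ℕ∞) (deriv^[2] f))
    simpa [Function.iterate_succ, Function.comp] using h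
  have hC3 : ContDiff ℝ (⊤ : ℕ∞) f3 := by
    have h := (hC2.iterate_deriv 1 : ContDiff ℝ (⊤ : ℕ∞) (deriv^[1] f2))
    simpa using h
  have hC4 : ContDiff ℝ (⊤ : ℕ∞) f4 := by
    have h := (hC3.iterate_deriv 1 : ContDiff ℝ (⊤ : ℕ∞) (deriv^[1] f3))
    simpa using h
  have hd2 : ∀ s, HasDerivAt f2 (f3 s) s := fun s =>
    ((hC2.differentiable (by norm_num)) s).hasDerivAt
  have hd3 : ∀ s, HasDerivAt f3 (f4 s) s := fun s =>
    ((hC3.differentiable (by norm_num)) s).hasDerivAt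
  have hcont3 : Continuous f3 := hC3.continuous
  have hcont4 : Continuous f4 := hC4.continuous
  -- vanishing at 0
  have hev : f =ᶠ[nhds 0] (fun _ => (0:H)) := by
    filter_upwards [Iio_mem_nhds hε] with s hs'
    exact hf0 s (le_of_lt hs')
  have hev1 : deriv f =ᶠ[nhds 0] (fun _ => (0:H)) := by
    have h := hev.deriv
    simpa [deriv_const] using h
  have hev2 : f2 =ᶠ[nhds 0] (fun _ => (0:H)) := by
    have h := hev1.deriv
    simpa [deriv_const] using h
  have hev3 : f3 =ᶠ[nhds 0] (fun _ => (0:H)) := by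
    have h := hev2.deriv
    simpa [deriv_const] using h
  have hf2_0 : f2 0 = 0 := hev2.eq_of_nhds
  have hf3_0 : f3 0 = 0 := hev3.eq_of_nhds
  -- restricted-scalar operator families
  let r : (H →L[ℂ] H) →ₗᵢ[ℝ] (H →L[ℝ] H) :=
    ContinuousLinearMap.restrictScalarsIsometry ℂ H H ℝ ℝ
  let wR : ℝ → H →L[ℝ] H := fun τ => r (cfc (wFun τ) T)
  let kR : ℝ → H →L[ℝ] H := fun τ => r (cfc (kFun τ) T)
  let KR : ℝ → H →L[ℝ] H := fun τ => r (cfc (KFun τ) T)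
  have hrd : ∀ (B A : ℝ → H →L[ℂ] H) (τ : ℝ), HasDerivAt B (A τ) τ →
      HasDerivAt (fun σ => r (B σ)) (r (A τ)) τ := by
    intro B A τ h
    exact (r.toContinuousLinearMap.hasFDerivAt.comp_hasDerivAt τ h)
  have hdk : ∀ τ, HasDerivAt kR (wR τ) τ := fun τ =>
    hrd _ (fun σ => cfc (wFun σ) T) τ (hasDerivAt_kOp T hT τ)
  have hdK : ∀ τ, HasDerivAt KR (kR τ) τ := fun τ =>
    hrd _ (fun σ => cfc (kFun σ) T) τ (hasDerivAt_KOp T hT τ)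
  have hwRcont : Continuous wR :=
    r.continuous.comp (continuous_wOp T hT)
  have hkRcont : Continuous kR := by
    rw [continuous_iff_continuousAt]
    exact fun τ => (hdk τ).continuousAt
  have hkR0 : kR 0 = 0 := by
    show r (cfc (kFun 0) T) = 0
    rw [kOp_zero T, map_zero]
  have hKR0 : KR 0 = 0 := by
    show r (cfc (KFun 0) T) = 0
    rw [KOp_zero T, map_zero]
  -- step A
  have stepA : (∫ s in (0:ℝ)..t, wR (t - s) (f2 s)) = ∫ s in (0:ℝ)..t, kR (t - s) (f3 s) :=
    ibp_kernel wR kR hdk hwRcont hkR0 f2 f3 hd2 hcont3 hf2_0 t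
  -- step B
  have stepB : (∫ s in (0:ℝ)..t, kR (t - s) (f3 s)) = ∫ s in (0:ℝ)..t, KR (t - s) (f4 s) :=
    ibp_kernel kR KR hdK hkRcont hKR0 f3 f4 hd3 hcont4 hf3_0 t
  -- identifications
  have e1 : (∫ s in (0:ℝ)..t, waveOp T (t - s) (f2 s)) = ∫ s in (0:ℝ)..t, wR (t - s) (f2 s) :=
    rfl
  have e2 : (∫ s in (0:ℝ)..t, cosOp T (t - s) (f3 s)) = ∫ s in (0:ℝ)..t, kR (t - s) (f3 s) :=
    rfl
  constructor
  · show -f t + (∫ s in (0:ℝ)..t, waveOp T (t - s) (f2 s))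
      = -f t + ∫ s in (0:ℝ)..t, cosOp T (t - s) (f3 s)
    rw [e1, e2, stepA]
  · -- membership in the domain
    have hpos := spectrum_nonneg_of T hT hs.T_positive
    let aR : ℝ → H →L[ℝ] H := fun τ => r (cfc (fun x => τ - wFun τ x) T)
    have haRcont : Continuous aR := by
      have h1 : ∀ τ, cfc (fun x => τ - wFun τ x) T
          = algebraMap ℝ (H →L[ℂ] H) τ - cfc (wFun τ) T := by
        intro τ
        rw [cfc_sub (fun _ => τ) (wFun τ) T continuousOn_const
          ((continuous_wFun τ).continuousOn), cfc_const τ T]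
      have : aR = fun τ => r (algebraMap ℝ (H →L[ℂ] H) τ - cfc (wFun τ) T) := by
        funext τ; rw [show aR τ = r (cfc (fun x => τ - wFun τ x) T) from rfl, h1]
      rw [this]
      apply r.continuous.comp
      apply Continuous.sub
      · exact (continuous_algebraMap ℝ (H →L[ℂ] H))
      · exact continuous_wOp T hT
    have hintg : IntervalIntegrable (fun s => aR (t - s) (f4 s)) volume 0 t := by
      apply Continuous.intervalIntegrable
      exact (haRcont.comp (continuous_const.sub continuous_id)).clm_apply hcont4
    have e3 : (∫ s in (0:ℝ)..t, KR (t - s) (f4 s))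
        = T (∫ s in (0:ℝ)..t, aR (t - s) (f4 s)) := by
      rw [← T.intervalIntegral_comp_comm hintg]
      apply intervalIntegral.integral_congr
      intro s _
      show KR (t - s) (f4 s) = T (aR (t - s) (f4 s))
      have := KOp_factor T hT hpos (t - s)
      show (cfc (KFun (t - s)) T) (f4 s) = T ((cfc (fun x => (t - s) - wFun (t - s) x) T) (f4 s))
      rw [this]
      rfl
    rw [e2, stepB, e3]
    exact hs.T_mem_domain _
end

section
/- Steady-state property: let f ∈ M, extend f and u^f by zero to t < 0, and for τ > 0 define the delayed control (𝒯_τ f)(t) := f(t − τ). Then 𝒯_τ f ∈ M and u^{𝒯_τ f}(t) = u^f(t − τ) for all t ≥ 0. -/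
open MeasureTheory
open scoped ComplexInnerProductSpace

variable {H : Type*} [NormedAddCommGroup H] [InnerProductSpace ℂ H] [CompleteSpace H]

/-- If `f` vanishes on `(-∞, ε]`, so does its derivative on `(-∞, ε)`. -/
lemma aux_deriv_zero (f : ℝ → H) (ε : ℝ) (h : ∀ t ≤ ε, f t = 0) :
    ∀ u < ε, deriv f u = 0 := by
  intro u hu
  have hev : f =ᶠ[nhds u] fun _ => (0 : H) :=
    Filter.eventuallyEq_of_mem (Iio_mem_nhds hu) (fun x hx => h x (le_of_lt hx))
  rw [hev.deriv_eq]
  simp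

lemma aux_deriv2_zero (f : ℝ → H) (ε : ℝ) (h : ∀ t ≤ ε, f t = 0) :
    ∀ u < ε, deriv (deriv f) u = 0 := by
  intro u hu
  have hev : deriv f =ᶠ[nhds u] fun _ => (0 : H) :=
    Filter.eventuallyEq_of_mem (Iio_mem_nhds hu)
      (fun x hx => aux_deriv_zero f ε h x hx)
  rw [hev.deriv_eq]
  simp

lemma aux_deriv2_shift (f : ℝ → H) (τ : ℝ) (s : ℝ) :
    deriv (deriv (fun t' => f (t' - τ))) s = deriv (deriv f) (s - τ) := by
  have h1 : deriv (fun t' => f (t' - τ)) = fun s => deriv f (s - τ) := by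
    funext x; exact deriv_comp_sub_const f τ x
  rw [h1, deriv_comp_sub_const (deriv f) τ s]

/-- steady-state property. Let `f ∈ M` (extended by zero to `t < 0`) and for
`τ > 0` let `(𝒯_τ f)(t) = f(t − τ)` be the delayed control.  Then `𝒯_τ f ∈ M` and
`u^{𝒯_τ f}(t) = u^f(t − τ)` for all `t ≥ 0`. -/
theorem stmt4 (L₀ L : H →ₗ.[ℂ] H) (T : H →L[ℂ] H) (K : Submodule ℂ H)
    [K.HasOrthogonalProjection] (hs : Setting L₀ L T K)
    (f : ℝ → H) (hf : IsSmoothControl K f) (τ : ℝ) (hτ : 0 < τ) :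
    IsSmoothControl K (fun t => f (t - τ)) ∧
    ∀ t : ℝ, 0 ≤ t → wave T (fun t' => f (t' - τ)) t = wave T f (t - τ) := by
  obtain ⟨hsm, hK, ε, hε, hzero⟩ := hf
  have hd2z : ∀ u < ε, deriv (deriv f) u = 0 := aux_deriv2_zero f ε hzero
  constructor
  · refine ⟨hsm.comp (contDiff_id.sub contDiff_const), fun t => hK _, ε, hε, fun t ht => ?_⟩
    exact hzero _ (by linarith)
  · intro t ht
    unfold wave
    rw [show (∫ s in (0:ℝ)..t, waveOp T (t - s) (deriv (deriv (fun t' => f (t' - τ))) s))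
        = ∫ s in (0:ℝ)..t, waveOp T ((t - τ) - (s - τ)) (deriv (deriv f) (s - τ)) from
      intervalIntegral.integral_congr fun s _ => by
        rw [aux_deriv2_shift f τ s]; ring_nf]
    rw [intervalIntegral.integral_comp_sub_right
      (fun u => waveOp T ((t - τ) - u) (deriv (deriv f) u)) τ]
    rcases le_or_gt τ t with hcase | hcase
    · -- t ≥ τ : drop the piece over (-τ, 0] where the integrand vanishes
      have h1 : (0:ℝ) - τ ≤ t - τ := by linarith
      have h2 : (0:ℝ) ≤ t - τ := by linarith
      rw [intervalIntegral.integral_of_le h1, intervalIntegral.integral_of_le h2]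
      congr 1
      refine MeasureTheory.setIntegral_eq_of_subset_of_forall_diff_eq_zero
        measurableSet_Ioc (fun x hx => ⟨by linarith [hx.1], hx.2⟩) fun u hu => ?_
      have hu0 : u ≤ 0 := by
        by_contra h
        exact hu.2 ⟨lt_of_not_ge h, hu.1.2⟩
      rw [hd2z u (by linarith), map_zero]
    · -- t < τ : both sides are 0
      have hL : ∫ u in (0:ℝ) - τ..t - τ, waveOp T ((t - τ) - u) (deriv (deriv f) u)
          = ∫ u in (0:ℝ) - τ..t - τ, (0 : H) := by
        refine intervalIntegral.integral_congr fun u hu => ?_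
        have : u ≤ max ((0:ℝ) - τ) (t - τ) := hu.2
        have hu' : u < ε := by
          rcases max_cases ((0:ℝ) - τ) (t - τ) with ⟨h, _⟩ | ⟨h, _⟩ <;> rw [h] at this <;> linarith
        rw [hd2z u hu', map_zero]
      have hR : ∫ s in (0:ℝ)..t - τ, waveOp T ((t - τ) - s) (deriv (deriv f) s)
          = ∫ s in (0:ℝ)..t - τ, (0 : H) := by
        refine intervalIntegral.integral_congr fun u hu => ?_
        have : u ≤ max (0:ℝ) (t - τ) := hu.2
        have hu' : u < ε := by
          rcases max_cases (0:ℝ) (t - τ) with ⟨h, _⟩ | ⟨h, _⟩ <;> rw [h] at this <;> linarith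
        rw [hd2z u hu', map_zero]
      rw [hL, hR]
      simp
end

section
/- For every f ∈ M and t ≥ 0: u^{f'}(t) = (u^f)'(t) and u^{f''}(t) = (u^f)''(t) = −L₀*u^f(t), where f' and f'' are the time derivatives of the control (which again belong to M). -/
open MeasureTheory
open scoped ComplexInnerProductSpace

set_option synthInstance.maxHeartbeats 1000000
set_option maxHeartbeats 1000000

variable {H : Type*} [NormedAddCommGroup H] [InnerProductSpace ℂ H] [CompleteSpace H]

namespace Stmt5Aux

/-! ### Scalar functions and Taylor-type bounds -/

noncomputable def hfun (t x : ℝ) : ℝ :=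
  if 0 < x then Real.sqrt x * Real.sin (t / Real.sqrt x) else 0

noncomputable def jfun (t x : ℝ) : ℝ :=
  if 0 < x then x * Real.cos (t / Real.sqrt x) else 0

noncomputable def pfun (t x : ℝ) : ℝ := x * hfun t x

lemma hfun_zero (x : ℝ) : hfun 0 x = 0 := by
  simp [hfun]

lemma abs_hfun_le {x : ℝ} (hx : 0 ≤ x) (t : ℝ) : |hfun t x| ≤ Real.sqrt x := by
  rcases lt_or_eq_of_le hx with hx' | hx'
  · rw [hfun, if_pos hx', abs_mul, abs_of_nonneg (Real.sqrt_nonneg x)]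
    calc Real.sqrt x * |Real.sin (t / Real.sqrt x)| ≤ Real.sqrt x * 1 :=
      mul_le_mul_of_nonneg_left (Real.abs_sin_le_one _) (Real.sqrt_nonneg x)
    _ = Real.sqrt x := mul_one _
  · simp [hfun, ← hx']

lemma abs_hfun_le' (t x : ℝ) : |hfun t x| ≤ Real.sqrt |x| := by
  rcases le_or_gt x 0 with hx | hx
  · simp [hfun, not_lt.mpr hx, Real.sqrt_nonneg]
  · simpa [abs_of_pos hx] using abs_hfun_le hx.le t

lemma abs_jfun_le' (t x : ℝ) : |jfun t x| ≤ |x| := by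
  rcases le_or_gt x 0 with hx | hx
  · simp [jfun, not_lt.mpr hx]
  · rw [jfun, if_pos hx, abs_mul]
    calc |x| * |Real.cos (t / Real.sqrt x)| ≤ |x| * 1 :=
      mul_le_mul_of_nonneg_left (Real.abs_cos_le_one _) (abs_nonneg x)
    _ = |x| := mul_one _

lemma hasDerivAt_hfun (x t : ℝ) :
    HasDerivAt (fun t => hfun t x) (if 0 < x then Real.cos (t / Real.sqrt x) else 0) t := by
  by_cases hx : 0 < x
  · have hr : Real.sqrt x ≠ 0 := (Real.sqrt_pos.mpr hx).ne'
    have h1 : HasDerivAt (fun t : ℝ => t / Real.sqrt x) (1 / Real.sqrt x) t := by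
      simpa using (hasDerivAt_id t).div_const (Real.sqrt x)
    have h2 := (h1.sin).const_mul (Real.sqrt x)
    have : Real.sqrt x * (Real.cos (t / Real.sqrt x) * (1 / Real.sqrt x))
        = Real.cos (t / Real.sqrt x) := by field_simp
    rw [this] at h2
    simp only [hfun, if_pos hx]
    simpa [if_pos hx] using h2
  · simp only [hfun, if_neg hx]
    simpa [if_neg hx] using hasDerivAt_const t (0 : ℝ)

lemma hasDerivAt_jfun (x t : ℝ) :
    HasDerivAt (fun t => jfun t x) (-(hfun t x)) t := by
  by_cases hx : 0 < x
  · have hr : Real.sqrt x ≠ 0 := (Real.sqrt_pos.mpr hx).ne'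
    have h1 : HasDerivAt (fun t : ℝ => t / Real.sqrt x) (1 / Real.sqrt x) t := by
      simpa using (hasDerivAt_id t).div_const (Real.sqrt x)
    have h2 := (h1.cos).const_mul x
    have : x * (-Real.sin (t / Real.sqrt x) * (1 / Real.sqrt x))
        = -(Real.sqrt x * Real.sin (t / Real.sqrt x)) := by
      field_simp
      rw [Real.sq_sqrt hx.le]
    rw [this] at h2
    simp only [jfun, hfun, if_pos hx]
    exact h2
  · simp only [jfun, hfun, if_neg hx, neg_zero]
    exact hasDerivAt_const t (0 : ℝ)

lemma hasDerivAt_pfun (x t : ℝ) :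
    HasDerivAt (fun t => pfun t x) (jfun t x) t := by
  have h := (hasDerivAt_hfun x t).const_mul x
  have : x * (if 0 < x then Real.cos (t / Real.sqrt x) else 0) = jfun t x := by
    by_cases hx : 0 < x <;> simp [jfun, hx]
  rw [this] at h
  exact h

/-- Mean value inequality helper. -/
lemma taylor_aux {E : Type*} [NormedAddCommGroup E] [NormedSpace ℝ E]
    {φ φ' : ℝ → E} {C : ℝ} {a b : ℝ} (hd : ∀ s, HasDerivAt φ (φ' s) s)
    (hC : ∀ s ∈ Set.uIcc a b, ‖φ' s‖ ≤ C) : ‖φ b - φ a‖ ≤ C * ‖b - a‖ :=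
  Convex.norm_image_sub_le_of_norm_hasDerivWithin_le
    (fun s _ => (hd s).hasDerivWithinAt) hC (convex_uIcc a b)
    Set.left_mem_uIcc Set.right_mem_uIcc

lemma B1 (x t t' : ℝ) : |hfun t' x - hfun t x| ≤ |t' - t| := by
  have := taylor_aux (φ := fun t => hfun t x)
    (φ' := fun t => if 0 < x then Real.cos (t / Real.sqrt x) else 0)
    (C := 1) (a := t) (b := t') (fun s => hasDerivAt_hfun x s)
    (fun s _ => by by_cases hx : 0 < x <;> simp [hx, Real.abs_cos_le_one])
  simpa using this

lemma B1j {x : ℝ} (hx : 0 ≤ x) (t t' : ℝ) : |jfun t' x - jfun t x| ≤ Real.sqrt x * |t' - t| := by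
  have := taylor_aux (φ := fun t => jfun t x) (φ' := fun t => -(hfun t x))
    (C := Real.sqrt x) (a := t) (b := t') (fun s => hasDerivAt_jfun x s)
    (fun s _ => by simpa using abs_hfun_le hx s)
  simpa using this

lemma B2 {x M : ℝ} (hx : 0 ≤ x) (hxM : x ≤ M) (t δ : ℝ) :
    |pfun (t + δ) x - pfun t x - δ * jfun t x| ≤ Real.sqrt M * |δ| * |δ| := by
  have hd : ∀ s, HasDerivAt (fun s => pfun s x - pfun t x - (s - t) * jfun t x)
      (jfun s x - jfun t x) s := by
    intro s
    have h1 : HasDerivAt (fun s : ℝ => (s - t) * jfun t x) (jfun t x) s := by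
      simpa using ((hasDerivAt_id s).sub_const t).mul_const (jfun t x)
    exact ((hasDerivAt_pfun x s).sub_const (pfun t x)).sub h1
  have hC : ∀ s ∈ Set.uIcc t (t + δ), ‖jfun s x - jfun t x‖ ≤ Real.sqrt M * |δ| := by
    intro s hs
    rw [Real.norm_eq_abs]
    calc |jfun s x - jfun t x| ≤ Real.sqrt x * |s - t| := B1j hx t s
    _ ≤ Real.sqrt M * |δ| := by
        apply mul_le_mul (Real.sqrt_le_sqrt hxM) _ (abs_nonneg _) (Real.sqrt_nonneg M)
        rw [abs_sub_le_iff]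
        constructor
        · rcases Set.mem_uIcc.mp hs with ⟨h1, h2⟩ | ⟨h1, h2⟩
          · linarith [le_abs_self δ]
          · linarith [neg_abs_le δ]
        · rcases Set.mem_uIcc.mp hs with ⟨h1, h2⟩ | ⟨h1, h2⟩
          · linarith [le_abs_self δ, abs_nonneg δ]
          · linarith [le_abs_self δ, neg_abs_le δ, abs_nonneg δ]
  have := taylor_aux (a := t) (b := t + δ) hd hC
  simpa [abs_sub_comm] using this

lemma B3 {x : ℝ} (hx : 0 ≤ x) (t δ : ℝ) :
    |jfun (t + δ) x - jfun t x + δ * hfun t x| ≤ |δ| * |δ| := by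
  have hd : ∀ s, HasDerivAt (fun s => jfun s x - jfun t x + (s - t) * hfun t x)
      (-(hfun s x) + hfun t x) s := by
    intro s
    have h1 : HasDerivAt (fun s : ℝ => (s - t) * hfun t x) (hfun t x) s := by
      simpa using ((hasDerivAt_id s).sub_const t).mul_const (hfun t x)
    exact ((hasDerivAt_jfun x s).sub_const (jfun t x)).add h1
  have hC : ∀ s ∈ Set.uIcc t (t + δ), ‖-(hfun s x) + hfun t x‖ ≤ |δ| := by
    intro s hs
    rw [Real.norm_eq_abs]
    have h2 : -(hfun s x) + hfun t x = -(hfun s x - hfun t x) := by ring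
    rw [h2, abs_neg]
    calc |hfun s x - hfun t x| ≤ |s - t| := B1 x t s
    _ ≤ |δ| := by
        rw [abs_sub_le_iff]
        constructor
        · rcases Set.mem_uIcc.mp hs with ⟨h1, h2⟩ | ⟨h1, h2⟩
          · linarith [le_abs_self δ]
          · linarith [neg_abs_le δ]
        · rcases Set.mem_uIcc.mp hs with ⟨h1, h2⟩ | ⟨h1, h2⟩
          · linarith [le_abs_self δ, abs_nonneg δ]
          · linarith [le_abs_self δ, neg_abs_le δ, abs_nonneg δ]
  have := taylor_aux (a := t) (b := t + δ) hd hC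
  simpa [abs_sub_comm] using this

/-! ### Continuity of the scalar functions -/

lemma continuous_hfun (t : ℝ) : Continuous (hfun t) := by
  rw [continuous_iff_continuousAt]
  intro x
  rcases lt_trichotomy x 0 with hx | rfl | hx
  · have hev : (fun y => hfun t y) =ᶠ[nhds x] fun _ => (0:ℝ) :=
      Filter.eventually_of_mem (Iio_mem_nhds hx)
        (fun y hy => by simp [hfun, not_lt.mpr (le_of_lt (Set.mem_Iio.mp hy))])
    exact continuousAt_const.congr hev.symm
  · have h0 : hfun t 0 = 0 := by simp [hfun]
    rw [ContinuousAt, h0]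
    have hb : ∀ y : ℝ, ‖hfun t y‖ ≤ Real.sqrt |y| := fun y => by
      rw [Real.norm_eq_abs]; exact abs_hfun_le' t y
    have hc : Continuous fun x : ℝ => Real.sqrt |x| := Real.continuous_sqrt.comp continuous_abs
    exact squeeze_zero_norm hb (by simpa using hc.tendsto 0)
  · have hev : (fun y => hfun t y) =ᶠ[nhds x]
        (fun y => Real.sqrt y * Real.sin (t / Real.sqrt y)) :=
      Filter.eventually_of_mem (Ioi_mem_nhds hx) (fun y hy => by simp [hfun, Set.mem_Ioi.mp hy])
    have hc : ContinuousAt (fun y => Real.sqrt y * Real.sin (t / Real.sqrt y)) x := by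
      apply ContinuousAt.mul Real.continuous_sqrt.continuousAt
      exact Real.continuous_sin.continuousAt.comp
        (continuousAt_const.div Real.continuous_sqrt.continuousAt (Real.sqrt_pos.mpr hx).ne')
    exact hc.congr hev.symm

lemma continuous_jfun (t : ℝ) : Continuous (jfun t) := by
  rw [continuous_iff_continuousAt]
  intro x
  rcases lt_trichotomy x 0 with hx | rfl | hx
  · have hev : (fun y => jfun t y) =ᶠ[nhds x] fun _ => (0:ℝ) :=
      Filter.eventually_of_mem (Iio_mem_nhds hx)
        (fun y hy => by simp [jfun, not_lt.mpr (le_of_lt (Set.mem_Iio.mp hy))])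
    exact continuousAt_const.congr hev.symm
  · have h0 : jfun t 0 = 0 := by simp [jfun]
    rw [ContinuousAt, h0]
    have hb : ∀ y : ℝ, ‖jfun t y‖ ≤ |y| := fun y => by
      rw [Real.norm_eq_abs]; exact abs_jfun_le' t y
    exact squeeze_zero_norm hb (by simpa using continuous_abs.tendsto (0:ℝ))
  · have hev : (fun y => jfun t y) =ᶠ[nhds x]
        (fun y => y * Real.cos (t / Real.sqrt y)) :=
      Filter.eventually_of_mem (Ioi_mem_nhds hx) (fun y hy => by simp [jfun, Set.mem_Ioi.mp hy])
    have hc : ContinuousAt (fun y => y * Real.cos (t / Real.sqrt y)) x := by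
      apply ContinuousAt.mul continuousAt_id
      exact Real.continuous_cos.continuousAt.comp
        (continuousAt_const.div Real.continuous_sqrt.continuousAt (Real.sqrt_pos.mpr hx).ne')
    exact hc.congr hev.symm

lemma continuous_pfun (t : ℝ) : Continuous (pfun t) :=
  continuous_id.mul (continuous_hfun t)

/-! ### Operator-valued functions via the continuous functional calculus -/

variable (T : H →L[ℂ] H)

noncomputable def Wop (t : ℝ) : H →L[ℂ] H := cfc (hfun t) T
noncomputable def Jop (t : ℝ) : H →L[ℂ] H := cfc (jfun t) T
noncomputable def Pop (t : ℝ) : H →L[ℂ] H := cfc (pfun t) T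

lemma waveOp_eq (t : ℝ) : waveOp T t = Wop T t := rfl

noncomputable def specBound : ℝ := ‖T‖ * ‖(1 : H →L[ℂ] H)‖

variable {T}

lemma mem_spec_le {x : ℝ} (hx : x ∈ spectrum ℝ T) : x ≤ specBound T :=
  (le_abs_self x).trans (by simpa [Real.norm_eq_abs, specBound] using spectrum.norm_le_norm_mul_of_mem hx)

lemma norm_Wop_le (t : ℝ) : ‖Wop T t‖ ≤ Real.sqrt (specBound T) := by
  apply norm_cfc_le (Real.sqrt_nonneg _)
  intro x hx
  rw [Real.norm_eq_abs]
  refine (abs_hfun_le' t x).trans (Real.sqrt_le_sqrt ((le_abs_self _).trans ?_))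
  simpa [Real.norm_eq_abs, specBound] using spectrum.norm_le_norm_mul_of_mem hx

lemma norm_Wop_sub_le (t t' : ℝ) : ‖Wop T t' - Wop T t‖ ≤ |t' - t| := by
  rw [Wop, Wop, ← cfc_sub (hfun t') (hfun t) T
    (continuous_hfun t').continuousOn (continuous_hfun t).continuousOn]
  exact norm_cfc_le (abs_nonneg _) fun x _ => by
    rw [Real.norm_eq_abs]; exact B1 x t t'

lemma continuous_Wop : Continuous fun t => Wop T t := by
  have h : LipschitzWith 1 (fun t => Wop T t) := by
    apply LipschitzWith.of_dist_le_mul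
    intro a b
    simp only [dist_eq_norm, NNReal.coe_one, one_mul]
    simpa [Real.norm_eq_abs] using norm_Wop_sub_le b a
  exact h.continuous

lemma hasDerivAt_of_sq_bound {E : Type*} [NormedAddCommGroup E] [NormedSpace ℝ E]
    {φ : ℝ → E} {v : E} {C : ℝ} {t : ℝ}
    (h : ∀ᶠ δ in nhds (0:ℝ), ‖φ (t + δ) - φ t - δ • v‖ ≤ C * |δ| * |δ|) :
    HasDerivAt φ v t := by
  rw [hasDerivAt_iff_isLittleO_nhds_zero]
  have h1 : (fun δ : ℝ => φ (t + δ) - φ t - δ • v) =O[nhds 0] fun δ => δ * δ :=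
    Asymptotics.IsBigO.of_bound C (by
      filter_upwards [h] with δ hδ
      calc ‖φ (t + δ) - φ t - δ • v‖ ≤ C * |δ| * |δ| := hδ
      _ = C * ‖δ * δ‖ := by rw [Real.norm_eq_abs, abs_mul]; ring)
  have h2 : (fun δ : ℝ => δ * δ) =o[nhds 0] fun δ => δ := by
    rw [Asymptotics.isLittleO_iff]
    intro c hc
    filter_upwards [Metric.ball_mem_nhds (0:ℝ) hc] with δ hδ
    rw [Metric.mem_ball, Real.dist_eq, sub_zero] at hδ
    rw [Real.norm_eq_abs, Real.norm_eq_abs, abs_mul]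
    exact mul_le_mul_of_nonneg_right hδ.le (abs_nonneg δ)
  exact h1.trans_isLittleO h2

variable (hT : IsSelfAdjoint T) (hsp : ∀ x ∈ spectrum ℝ T, 0 ≤ x)

include hsp in
lemma hasDerivAt_Pop (t : ℝ) : HasDerivAt (fun t => Pop T t) (Jop T t) t := by
  apply hasDerivAt_of_sq_bound (C := Real.sqrt (specBound T))
  apply Filter.Eventually.of_forall
  intro δ
  have e1 : Pop T (t + δ) - Pop T t - δ • Jop T t
      = cfc (fun x => pfun (t + δ) x - pfun t x - δ * jfun t x) T := by
    rw [Pop, Pop, Jop, ← cfc_const_mul δ (jfun t) T (continuous_jfun t).continuousOn,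
      ← cfc_sub (pfun (t+δ)) (pfun t) T
        (continuous_pfun _).continuousOn (continuous_pfun t).continuousOn,
      ← cfc_sub (fun x => pfun (t + δ) x - pfun t x) (fun x => δ * jfun t x) T (((continuous_pfun _).sub (continuous_pfun t)).continuousOn)
        ((continuous_const.mul (continuous_jfun t)).continuousOn)]
  rw [e1]
  exact norm_cfc_le (by positivity) fun x hx => by
    rw [Real.norm_eq_abs]; exact B2 (hsp x hx) (mem_spec_le hx) t δ

include hsp in
lemma hasDerivAt_Jop (t : ℝ) :
    HasDerivAt (fun t => Jop T t) (-(Wop T t)) t := by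
  apply hasDerivAt_of_sq_bound (C := 1)
  apply Filter.Eventually.of_forall
  intro δ
  have e1 : Jop T (t + δ) - Jop T t - δ • (-(Wop T t))
      = cfc (fun x => jfun (t + δ) x - jfun t x + δ * hfun t x) T := by
    rw [smul_neg, sub_neg_eq_add, Jop, Jop, Wop,
      ← cfc_const_mul δ (hfun t) T (continuous_hfun t).continuousOn,
      ← cfc_sub (jfun (t+δ)) (jfun t) T
        (continuous_jfun _).continuousOn (continuous_jfun t).continuousOn,
      ← cfc_add (a := T) (fun x => jfun (t + δ) x - jfun t x) (fun x => δ * hfun t x) (((continuous_jfun _).sub (continuous_jfun t)).continuousOn)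
        ((continuous_const.mul (continuous_hfun t)).continuousOn)]
  rw [e1]
  exact norm_cfc_le (by positivity) fun x hx => by
    rw [Real.norm_eq_abs]; simpa using B3 (hsp x hx) t δ

include hT in
lemma Pop_eq (t : ℝ) : Pop T t = T * Wop T t := by
  have h := cfc_mul (fun y : ℝ => y) (hfun t) T continuousOn_id (continuous_hfun t).continuousOn
  rw [cfc_id' ℝ T hT] at h
  exact h

lemma Wop_zero : Wop T 0 = 0 := by
  have h : hfun 0 = fun _ : ℝ => (0:ℝ) := funext hfun_zero
  rw [Wop, h]
  exact cfc_zero ℝ T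

lemma Pop_zero : Pop T 0 = 0 := by
  have h : pfun 0 = fun _ : ℝ => (0:ℝ) := funext fun x => by simp [pfun, hfun_zero]
  rw [Pop, h]
  exact cfc_zero ℝ T

include hT hsp in
lemma Jop_zero : Jop T 0 = T := by
  have h : (spectrum ℝ T).EqOn (jfun 0) id := by
    intro x hx
    rcases (hsp x hx).lt_or_eq with hx' | hx'
    · simp [jfun, hx']
    · simp [jfun, ← hx']
  rw [Jop, cfc_congr h]
  exact cfc_id ℝ T hT

include hsp in
lemma continuous_Pop : Continuous fun t => Pop T t :=
  continuous_iff_continuousAt.mpr fun t => (hasDerivAt_Pop hsp t).continuousAt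

include hsp in
lemma continuous_Jop : Continuous fun t => Jop T t :=
  continuous_iff_continuousAt.mpr fun t => (hasDerivAt_Jop hsp t).continuousAt

/-! ### The convolution integral -/

lemma wI_eq (u : ℝ → H) (τ : ℝ) :
    (∫ s in (0:ℝ)..τ, Wop T (τ - s) (u s)) = ∫ σ in (0:ℝ)..τ, Wop T σ (u (τ - σ)) := by
  have h := intervalIntegral.integral_comp_sub_left (a := (0:ℝ)) (b := τ)
    (fun σ => Wop T σ (u (τ - σ))) τ
  simp only [sub_sub_cancel, sub_self, sub_zero] at h
  exact h

lemma hasDerivAt_wI' {g : ℝ → H} (hg : ContDiff ℝ (⊤:ℕ∞) g) {ε : ℝ} (hε : 0 < ε)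
    (hg0 : ∀ s ≤ ε, g s = 0) (t : ℝ) :
    HasDerivAt (fun τ => ∫ σ in (0:ℝ)..τ, Wop T σ (g (τ - σ)))
      (∫ σ in (0:ℝ)..t, Wop T σ (deriv g (t - σ))) t := by
  have hg1 : ContDiff ℝ (⊤:ℕ∞) (deriv g) := (contDiff_infty_iff_deriv.mp hg).2
  have hg2 : ContDiff ℝ (⊤:ℕ∞) (deriv (deriv g)) := (contDiff_infty_iff_deriv.mp hg1).2
  set M := Real.sqrt (specBound T) with hM
  have hM0 : 0 ≤ M := Real.sqrt_nonneg _
  set R : ℝ := 2 * |t| + 1 with hR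
  obtain ⟨C, hC⟩ := (isCompact_Icc (a := -R) (b := R)).exists_bound_of_continuousOn
    hg2.continuous.continuousOn
  set C0 : ℝ := max C 0 with hC0
  have hC00 : 0 ≤ C0 := le_max_right _ _
  have hlip : ∀ a ∈ Set.Icc (-R) R, ∀ b ∈ Set.Icc (-R) R,
      ‖deriv g b - deriv g a‖ ≤ C0 * ‖b - a‖ := by
    intro a ha b hb
    exact Convex.norm_image_sub_le_of_norm_hasDerivWithin_le
      (fun x _ => ((hg1.differentiable (by simp) x).hasDerivAt).hasDerivWithinAt)
      (fun x hx => (hC x hx).trans (le_max_left _ _)) (convex_Icc _ _) ha hb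
  have habs : ∀ σ ∈ Set.uIcc (0:ℝ) t, |σ| ≤ |t| := by
    intro σ hσ
    rcases Set.mem_uIcc.mp hσ with ⟨h1, h2⟩ | ⟨h1, h2⟩
    · rw [abs_of_nonneg h1]; exact h2.trans (le_abs_self t)
    · rw [abs_of_nonpos h2]; exact (neg_le_neg h1).trans (neg_le_abs t)
  have htay : ∀ δ : ℝ, |δ| ≤ 1 → ∀ σ ∈ Set.uIcc (0:ℝ) t,
      ‖g (t + δ - σ) - g (t - σ) - δ • deriv g (t - σ)‖ ≤ C0 * |δ| * |δ| := by
    intro δ hδ σ hσ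
    set a : ℝ := t - σ with ha
    have haR : ∀ δ' ∈ Set.uIcc (0:ℝ) δ, a + δ' ∈ Set.Icc (-R) R := by
      intro δ' hδ'
      have h1 : |δ'| ≤ |δ| := by
        rcases Set.mem_uIcc.mp hδ' with ⟨u1, u2⟩ | ⟨u1, u2⟩
        · rw [abs_of_nonneg u1]; exact u2.trans (le_abs_self δ)
        · rw [abs_of_nonpos u2]; exact (neg_le_neg u1).trans (neg_le_abs δ)
      have ha1 : |a| ≤ |t| + |σ| := by
        rw [ha, sub_eq_add_neg]
        exact (abs_add_le _ _).trans (by rw [abs_neg])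
      have h2 : |a + δ'| ≤ R := by
        calc |a + δ'| ≤ |a| + |δ'| := abs_add_le _ _
        _ ≤ (|t| + |σ|) + |δ| := add_le_add ha1 h1
        _ ≤ (|t| + |t|) + 1 := add_le_add (add_le_add le_rfl (habs σ hσ)) hδ
        _ = R := by rw [hR]; ring
      exact Set.mem_Icc.mpr (abs_le.mp h2)
    have hu : ∀ δ', HasDerivAt (fun δ' => g (a + δ') - g a - δ' • deriv g a)
        (deriv g (a + δ') - deriv g a) δ' := by
      intro δ'
      have hgd : HasDerivAt (fun δ' : ℝ => g (a + δ')) (deriv g (a + δ')) δ' := by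
        have h1 : HasDerivAt g (deriv g (a + δ')) (a + δ') :=
          (hg.differentiable (by simp) (a + δ')).hasDerivAt
        have h2 : HasDerivAt (fun δ' : ℝ => a + δ') 1 δ' := by
          simpa using (hasDerivAt_id δ').const_add a
        simpa [Function.comp_def] using h1.scomp δ' h2
      have h3 : HasDerivAt (fun δ' : ℝ => δ' • deriv g a) (deriv g a) δ' := by
        simpa using (hasDerivAt_id δ').smul_const (deriv g a)
      exact (hgd.sub_const (g a)).sub h3
    have hbound : ∀ δ' ∈ Set.uIcc (0:ℝ) δ,
        ‖deriv g (a + δ') - deriv g a‖ ≤ C0 * |δ| := by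
      intro δ' hδ'
      have h1 : |δ'| ≤ |δ| := by
        rcases Set.mem_uIcc.mp hδ' with ⟨u1, u2⟩ | ⟨u1, u2⟩
        · rw [abs_of_nonneg u1]; exact u2.trans (le_abs_self δ)
        · rw [abs_of_nonpos u2]; exact (neg_le_neg u1).trans (neg_le_abs δ)
      have h2 := hlip a (by simpa using haR 0 Set.left_mem_uIcc) (a + δ') (haR δ' hδ')
      calc ‖deriv g (a + δ') - deriv g a‖ ≤ C0 * ‖a + δ' - a‖ := h2
      _ = C0 * |δ'| := by rw [add_sub_cancel_left, Real.norm_eq_abs]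
      _ ≤ C0 * |δ| := mul_le_mul_of_nonneg_left h1 hC00
    have := taylor_aux (a := 0) (b := δ) hu hbound
    simp only [add_zero, zero_smul, sub_zero, sub_self, Real.norm_eq_abs] at this
    have hrw : t + δ - σ = a + δ := by rw [ha]; ring
    rw [hrw]
    calc ‖g (a + δ) - g a - δ • deriv g a‖
        = ‖g (a + δ) - g a - δ • deriv g a - (g (a + 0) - g a - (0:ℝ) • deriv g a)‖ := by
          simp
    _ ≤ C0 * |δ| * ‖δ - 0‖ := taylor_aux (a := 0) (b := δ) hu hbound
    _ = C0 * |δ| * |δ| := by rw [sub_zero, Real.norm_eq_abs]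
  -- integrability helper
  have hcW : Continuous fun σ : ℝ => Wop T σ := continuous_Wop
  apply hasDerivAt_of_sq_bound (C := M * C0 * |t|)
  have hnhds : Metric.closedBall (0:ℝ) (min ε 1) ∈ nhds (0:ℝ) :=
    Metric.closedBall_mem_nhds 0 (lt_min hε one_pos)
  filter_upwards [hnhds] with δ hδ
  rw [Metric.mem_closedBall, Real.dist_eq, sub_zero] at hδ
  have hδε : |δ| ≤ ε := hδ.trans (min_le_left _ _)
  have hδ1 : |δ| ≤ 1 := hδ.trans (min_le_right _ _)
  have cg1 : Continuous fun σ : ℝ => g (t + δ - σ) :=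
    hg.continuous.comp (continuous_const.sub continuous_id)
  have cg2 : Continuous fun σ : ℝ => g (t - σ) :=
    hg.continuous.comp (continuous_const.sub continuous_id)
  have cg3 : Continuous fun σ : ℝ => deriv g (t - σ) :=
    hg1.continuous.comp (continuous_const.sub continuous_id)
  have i1 : IntervalIntegrable (fun σ => Wop T σ (g (t + δ - σ))) volume 0 t :=
    (hcW.clm_apply cg1).intervalIntegrable 0 t
  have i1' : IntervalIntegrable (fun σ => Wop T σ (g (t + δ - σ))) volume t (t+δ) :=
    (hcW.clm_apply cg1).intervalIntegrable t (t+δ)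
  have i2 : IntervalIntegrable (fun σ => Wop T σ (g (t - σ))) volume 0 t :=
    (hcW.clm_apply cg2).intervalIntegrable 0 t
  have i3 : IntervalIntegrable (fun σ => Wop T σ (deriv g (t - σ))) volume 0 t :=
    (hcW.clm_apply cg3).intervalIntegrable 0 t
  have i4 : IntervalIntegrable (fun σ => δ • Wop T σ (deriv g (t - σ))) volume 0 t :=
    i3.smul δ
  have hsplit : (∫ σ in (0:ℝ)..(t+δ), Wop T σ (g (t + δ - σ)))
      = (∫ σ in (0:ℝ)..t, Wop T σ (g (t + δ - σ)))
        + ∫ σ in t..(t+δ), Wop T σ (g (t + δ - σ)) :=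
    (intervalIntegral.integral_add_adjacent_intervals i1 i1').symm
  have hzero : (∫ σ in t..(t+δ), Wop T σ (g (t + δ - σ))) = 0 := by
    have hz : ∀ σ ∈ Set.uIcc t (t+δ), Wop T σ (g (t + δ - σ)) = (fun _ => (0:H)) σ := by
      intro σ hσ
      have hle : t + δ - σ ≤ ε := by
        rcases Set.mem_uIcc.mp hσ with ⟨u1, u2⟩ | ⟨u1, u2⟩
        · have := le_abs_self δ; linarith
        · linarith [hε.le, abs_nonneg δ]
      simp [hg0 _ hle]
    rw [intervalIntegral.integral_congr hz, intervalIntegral.integral_zero]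
  have hsmul : δ • (∫ σ in (0:ℝ)..t, Wop T σ (deriv g (t - σ)))
      = ∫ σ in (0:ℝ)..t, δ • Wop T σ (deriv g (t - σ)) :=
    (intervalIntegral.integral_smul δ _).symm
  have hdiff : (∫ σ in (0:ℝ)..(t+δ), Wop T σ (g (t + δ - σ)))
      - (∫ σ in (0:ℝ)..t, Wop T σ (g (t - σ)))
      - δ • (∫ σ in (0:ℝ)..t, Wop T σ (deriv g (t - σ)))
      = ∫ σ in (0:ℝ)..t,
          Wop T σ (g (t + δ - σ) - g (t - σ) - δ • deriv g (t - σ)) := by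
    rw [hsplit, hzero, add_zero, hsmul,
      ← intervalIntegral.integral_sub i1 i2,
      ← intervalIntegral.integral_sub (i1.sub i2) i4]
    apply intervalIntegral.integral_congr
    intro σ _
    simp [map_sub, ContinuousLinearMap.map_smul_of_tower]
  rw [hdiff]
  have hb : ∀ σ ∈ Set.uIoc (0:ℝ) t,
      ‖Wop T σ (g (t + δ - σ) - g (t - σ) - δ • deriv g (t - σ))‖
        ≤ M * (C0 * |δ| * |δ|) := by
    intro σ hσ
    have hσ' : σ ∈ Set.uIcc (0:ℝ) t := Set.Ioc_subset_Icc_self hσ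
    calc ‖Wop T σ (g (t + δ - σ) - g (t - σ) - δ • deriv g (t - σ))‖
        ≤ ‖Wop T σ‖ * ‖g (t + δ - σ) - g (t - σ) - δ • deriv g (t - σ)‖ :=
          ContinuousLinearMap.le_opNorm _ _
    _ ≤ M * (C0 * |δ| * |δ|) :=
        mul_le_mul (norm_Wop_le σ) (htay δ hδ1 σ hσ') (norm_nonneg _) hM0
  calc ‖∫ σ in (0:ℝ)..t,
      Wop T σ (g (t + δ - σ) - g (t - σ) - δ • deriv g (t - σ))‖
      ≤ M * (C0 * |δ| * |δ|) * |t - 0| :=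
        intervalIntegral.norm_integral_le_of_norm_le_const hb
  _ = M * C0 * |t| * |δ| * |δ| := by rw [sub_zero]; ring

/-- Derivative of the wave integral. -/
lemma hasDerivAt_wI {g : ℝ → H} (hg : ContDiff ℝ (⊤:ℕ∞) g) {ε : ℝ} (hε : 0 < ε)
    (hg0 : ∀ s ≤ ε, g s = 0) (t : ℝ) :
    HasDerivAt (fun τ => ∫ s in (0:ℝ)..τ, waveOp T (τ - s) (g s))
      (∫ s in (0:ℝ)..t, waveOp T (t - s) (deriv g s)) t := by
  show HasDerivAt (fun τ => ∫ s in (0:ℝ)..τ, Wop T (τ - s) (g s))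
      (∫ s in (0:ℝ)..t, Wop T (t - s) (deriv g s)) t
  have e1 : (fun τ => ∫ s in (0:ℝ)..τ, Wop T (τ - s) (g s))
      = fun τ => ∫ σ in (0:ℝ)..τ, Wop T σ (g (τ - σ)) := funext fun τ => wI_eq g τ
  rw [e1, wI_eq (deriv g) t]
  exact hasDerivAt_wI' hg hε hg0 t

include hT hsp in
/-- Integration by parts: the wave integral lands in the domain of `L`. -/
lemma ibp {g : ℝ → H} (hg : ContDiff ℝ (⊤:ℕ∞) g) {ε : ℝ} (hε : 0 < ε)
    (hg0 : ∀ s ≤ ε, g s = 0) (t : ℝ) :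
    (∫ s in (0:ℝ)..t, waveOp T (t - s) (g s))
      = T (g t - ∫ s in (0:ℝ)..t, waveOp T (t - s) (deriv (deriv g) s)) := by
  show (∫ s in (0:ℝ)..t, Wop T (t - s) (g s))
      = T (g t - ∫ s in (0:ℝ)..t, Wop T (t - s) (deriv (deriv g) s))
  have hg1 : ContDiff ℝ (⊤:ℕ∞) (deriv g) := (contDiff_infty_iff_deriv.mp hg).2
  have hg2 : ContDiff ℝ (⊤:ℕ∞) (deriv (deriv g)) := (contDiff_infty_iff_deriv.mp hg1).2
  have hg00 : g 0 = 0 := hg0 0 hε.le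
  have hgd0 : deriv g 0 = 0 := by
    have hev : g =ᶠ[nhds (0:ℝ)] fun _ => (0:H) :=
      Filter.eventually_of_mem (Iio_mem_nhds hε) fun s hs => hg0 s (le_of_lt (Set.mem_Iio.mp hs))
    rw [hev.deriv_eq]
    exact deriv_const _ _
  set F : ℝ → H := fun s => Pop T (t - s) (deriv g s) + Jop T (t - s) (g s) with hF
  have hFd : ∀ s, HasDerivAt F
      (Pop T (t - s) (deriv (deriv g) s) + Wop T (t - s) (g s)) s := by
    intro s
    have hsub : HasDerivAt (fun s : ℝ => t - s) (-1) s := by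
      simpa using (hasDerivAt_id s).const_sub t
    have h1 : HasDerivAt (fun s : ℝ => Pop T (t - s)) (-(Jop T (t - s))) s := by
      have := (hasDerivAt_Pop hsp (t - s)).scomp s hsub
      simpa [Function.comp_def] using this
    have h2 : HasDerivAt (fun s : ℝ => Jop T (t - s)) (Wop T (t - s)) s := by
      have := (hasDerivAt_Jop hsp (t - s)).scomp s hsub
      simpa [Function.comp_def] using this
    set rs : (H →L[ℂ] H) →L[ℝ] (H →L[ℝ] H) :=
      ContinuousLinearMap.restrictScalarsL ℂ H H ℝ ℝ with hrs
    have h1' : HasDerivAt (fun s : ℝ => rs (Pop T (t - s))) (rs (-(Jop T (t - s)))) s :=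
      rs.hasFDerivAt.comp_hasDerivAt s h1
    have h2' : HasDerivAt (fun s : ℝ => rs (Jop T (t - s))) (rs (Wop T (t - s))) s :=
      rs.hasFDerivAt.comp_hasDerivAt s h2
    have h3 := h1'.clm_apply ((hg1.differentiable (by simp) s).hasDerivAt)
    have h4 := h2'.clm_apply ((hg.differentiable (by simp) s).hasDerivAt)
    have h5 := h3.add h4
    have he : rs (-(Jop T (t - s))) (deriv g s) + rs (Pop T (t - s)) (deriv (deriv g) s)
        + (rs (Wop T (t - s)) (g s) + rs (Jop T (t - s)) (deriv g s))
        = Pop T (t - s) (deriv (deriv g) s) + Wop T (t - s) (g s) := by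
      simp only [hrs, ContinuousLinearMap.coe_restrict_scalarsL',
        ContinuousLinearMap.coe_restrictScalars', ContinuousLinearMap.neg_apply]
      abel
    rw [he] at h5
    exact h5
  have hcont1 : Continuous fun s => Pop T (t - s) (deriv (deriv g) s) :=
    ((continuous_Pop hsp).comp (continuous_const.sub continuous_id)).clm_apply hg2.continuous
  have hcont2 : Continuous fun s => Wop T (t - s) (g s) :=
    (continuous_Wop.comp (continuous_const.sub continuous_id)).clm_apply hg.continuous
  have hFTC := intervalIntegral.integral_eq_sub_of_hasDerivAt (a := 0) (b := t)
    (fun s _ => hFd s) ((hcont1.add hcont2).intervalIntegrable 0 t)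
  have hFt : F t = T (g t) := by
    rw [hF]
    simp only [sub_self, Pop_zero, Jop_zero hT hsp, ContinuousLinearMap.zero_apply, zero_add]
  have hF0 : F 0 = 0 := by
    rw [hF]
    simp only [sub_zero, hgd0, hg00, map_zero, add_zero]
  rw [hFt, hF0, sub_zero] at hFTC
  rw [intervalIntegral.integral_add (hcont1.intervalIntegrable 0 t)
    (hcont2.intervalIntegrable 0 t)] at hFTC
  have hPop : (∫ s in (0:ℝ)..t, Pop T (t - s) (deriv (deriv g) s))
      = T (∫ s in (0:ℝ)..t, Wop T (t - s) (deriv (deriv g) s)) := by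
    have hc : IntervalIntegrable (fun s => Wop T (t - s) (deriv (deriv g) s)) volume 0 t :=
      ((continuous_Wop.comp (continuous_const.sub continuous_id)).clm_apply
        hg2.continuous).intervalIntegrable 0 t
    rw [← ContinuousLinearMap.intervalIntegral_comp_comm T hc]
    apply intervalIntegral.integral_congr
    intro s _
    show (Pop T (t - s)) (deriv (deriv g) s) = T ((Wop T (t - s)) (deriv (deriv g) s))
    rw [Pop_eq hT, ContinuousLinearMap.mul_apply]
  rw [hPop] at hFTC
  rw [map_sub]
  exact eq_sub_of_add_eq' hFTC

/-! ### Smooth controls -/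

lemma smoothControl_deriv {K : Submodule ℂ H} [Submodule.HasOrthogonalProjection K]
    {f : ℝ → H} (hf : IsSmoothControl K f) : IsSmoothControl K (deriv f) := by
  obtain ⟨hC, hK, ε, hε, h0⟩ := hf
  refine ⟨(contDiff_infty_iff_deriv.mp hC).2, ?_, ε/2, half_pos hε, ?_⟩
  · intro t
    set Q : H →L[ℂ] H := K.subtypeL.comp K.orthogonalProjectionOnto with hQ
    have hQmem : ∀ y : H, Q y ∈ K := fun y => by
      rw [hQ, ContinuousLinearMap.comp_apply, Submodule.subtypeL_apply]
      exact SetLike.coe_mem _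
    have hQid : ∀ y, y ∈ K → Q y = y := fun y hy => by
      rw [hQ, ContinuousLinearMap.comp_apply, Submodule.subtypeL_apply]
      exact K.starProjection_eq_self_iff.mpr hy
    have hfe : (fun s => Q (f s)) = f := funext fun s => hQid _ (hK s)
    have h1 : HasDerivAt f (deriv f t) t :=
      (hC.differentiable (by simp) t).hasDerivAt
    have h2 : HasDerivAt (⇑(Q.restrictScalars ℝ) ∘ f) ((Q.restrictScalars ℝ) (deriv f t)) t :=
      (Q.restrictScalars ℝ).hasFDerivAt.comp_hasDerivAt t h1
    rw [ContinuousLinearMap.coe_restrictScalars'] at h2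
    have hfe' : ⇑Q ∘ f = f := funext fun s => hQid _ (hK s)
    rw [hfe'] at h2
    have h3 : deriv f t = Q (deriv f t) := h2.deriv
    rw [h3]
    exact hQmem _
  · intro t ht
    have hev : f =ᶠ[nhds t] fun _ => (0:H) :=
      Filter.eventually_of_mem (Iio_mem_nhds (lt_of_le_of_lt ht (by linarith)))
        fun s hs => h0 s (le_of_lt (Set.mem_Iio.mp hs))
    rw [hev.deriv_eq]
    exact deriv_const _ _

/-- The wave has derivative `wave T (deriv f)` everywhere. -/
lemma hasDerivAt_wave {K : Submodule ℂ H} [Submodule.HasOrthogonalProjection K] (T : H →L[ℂ] H)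
    {f : ℝ → H} (hf : IsSmoothControl K f) (τ : ℝ) :
    HasDerivAt (wave T f) (wave T (deriv f) τ) τ := by
  have hd2 := smoothControl_deriv (smoothControl_deriv hf)
  obtain ⟨hC2, _, ε2, hε2, h02⟩ := hd2
  have h1 : HasDerivAt (fun τ => -f τ) (-(deriv f τ)) τ :=
    ((hf.1.differentiable (by simp) τ).hasDerivAt).neg
  have h2 := hasDerivAt_wI (T := T) hC2 hε2 h02 τ
  have h3 := h1.add h2
  show HasDerivAt (fun t => -f t + ∫ s in (0:ℝ)..t, waveOp T (t - s) (deriv (deriv f) s))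
      (-(deriv f τ) + ∫ s in (0:ℝ)..τ, waveOp T (τ - s) (deriv (deriv (deriv f)) s)) τ
  exact h3

lemma deriv_wave {K : Submodule ℂ H} [Submodule.HasOrthogonalProjection K] (T : H →L[ℂ] H)
    {f : ℝ → H} (hf : IsSmoothControl K f) :
    deriv (wave T f) = wave T (deriv f) :=
  funext fun τ => (hasDerivAt_wave T hf τ).deriv

end Stmt5Aux

/-- For every `f ∈ M` and `t ≥ 0`: `u^{f'}(t) = (u^f)'(t)` and
`u^{f''}(t) = (u^f)''(t) = −L₀*u^f(t)`, where the time derivatives `f'` and `f''` of the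
control again belong to `M`. -/
theorem stmt5 (L₀ L : H →ₗ.[ℂ] H) (T : H →L[ℂ] H) (K : Submodule ℂ H)
    [Submodule.HasOrthogonalProjection K] (hs : Setting L₀ L T K)
    (f : ℝ → H) (hf : IsSmoothControl K f) :
    IsSmoothControl K (deriv f) ∧ IsSmoothControl K (deriv (deriv f)) ∧
    ∀ t : ℝ, 0 ≤ t →
      wave T (deriv f) t = deriv (wave T f) t ∧
      wave T (deriv (deriv f)) t = deriv (deriv (wave T f)) t ∧
      ∃ ht : wave T f t ∈ L₀.adjoint.domain,
        wave T (deriv (deriv f)) t = -(L₀.adjoint ⟨wave T f t, ht⟩) := by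
  have hT : IsSelfAdjoint T := hs.T_selfadjoint
  have hpos : (0 : H →L[ℂ] H) ≤ T := by
    rw [ContinuousLinearMap.nonneg_iff_isPositive]
    refine ⟨hT.isSymmetric, fun x => ?_⟩
    simpa [ContinuousLinearMap.reApplyInnerSelf] using hs.T_positive x
  have hsp : ∀ x ∈ spectrum ℝ T, 0 ≤ x := fun x hx => spectrum_nonneg_of_nonneg hpos hx
  have hd1 := Stmt5Aux.smoothControl_deriv hf
  have hd2 := Stmt5Aux.smoothControl_deriv hd1
  refine ⟨hd1, hd2, fun t _ => ?_⟩
  have ed1 : deriv (wave T f) = wave T (deriv f) := Stmt5Aux.deriv_wave T hf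
  have ed2 : deriv (wave T (deriv f)) = wave T (deriv (deriv f)) := Stmt5Aux.deriv_wave T hd1
  refine ⟨by rw [ed1], by rw [ed1, ed2], ?_⟩
  obtain ⟨hC2, hK2, ε2, hε2, h02⟩ := hd2
  have hibp := Stmt5Aux.ibp hT hsp hC2 hε2 h02 t
  set z : H := deriv (deriv f) t
    - ∫ s in (0:ℝ)..t, waveOp T (t - s) (deriv (deriv (deriv (deriv f))) s) with hz
  have hTz : T z ∈ L.domain := hs.T_mem_domain z
  have hLz : L ⟨T z, hTz⟩ = z := hs.T_inv_right z hTz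
  have hdom2 : T z ∈ L₀.adjoint.domain := hs.le_adjoint.1 hTz
  obtain ⟨hft, hft0⟩ := (hs.kernel (f t)).mp (hf.2.1 t)
  have hwt : wave T f t = -f t + T z := by
    rw [wave, hibp]
  have hmem : wave T f t ∈ L₀.adjoint.domain := by
    rw [hwt]
    exact Submodule.add_mem _ (Submodule.neg_mem _ hft) hdom2
  refine ⟨hmem, ?_⟩
  have hsplit : (⟨wave T f t, hmem⟩ : L₀.adjoint.domain)
      = -(⟨f t, hft⟩ : L₀.adjoint.domain) + (⟨T z, hdom2⟩ : L₀.adjoint.domain) := by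
    apply Subtype.ext
    simp [hwt]
  rw [hsplit, LinearPMap.map_add, LinearPMap.map_neg, hft0, neg_zero, zero_add]
  have hLeq : L₀.adjoint (⟨T z, hdom2⟩ : L₀.adjoint.domain) = L ⟨T z, hTz⟩ :=
    (hs.le_adjoint.2 rfl).symm
  rw [hLeq, hLz, hz]
  show wave T (deriv (deriv f)) t
      = -(deriv (deriv f) t - ∫ s in (0:ℝ)..t, waveOp T (t - s)
          (deriv (deriv (deriv (deriv f))) s))
  rw [wave, neg_sub]
  abel
end

section
/- Closability of the input–state map: for every τ > 0, if (f_n) is a sequence in M with ∫₀^τ ‖f_n(s)‖² ds → 0 and u^{f_n}(τ) → y in H, then y = 0; i.e., the map f|_{[0,τ]} ↦ u^f(τ), defined on M as a subset of L²([0,τ]; K), is closable as a map from L²([0,τ]; K) to H. -/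
open MeasureTheory
open scoped ComplexInnerProductSpace

variable {H : Type*} [NormedAddCommGroup H] [InnerProductSpace ℂ H] [CompleteSpace H]

namespace Stmt7Aux

noncomputable def hfun (t x : ℝ) : ℝ := Real.sqrt x * Real.sin (t / Real.sqrt x)
noncomputable def pfun (t x : ℝ) : ℝ := Real.sqrt x * Real.cos (t / Real.sqrt x)
noncomputable def afun (t x : ℝ) : ℝ := hfun t x * x * x
noncomputable def bfun (t x : ℝ) : ℝ := Real.sqrt x * pfun t x * x
noncomputable def cfun (t x : ℝ) : ℝ := -(hfun t x * x)
noncomputable def dfun (t x : ℝ) : ℝ := -(Real.sqrt x * pfun t x)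
noncomputable def kfun (t x : ℝ) : ℝ := if 0 < x then Real.cos (t / Real.sqrt x) else 0

/-! ### Continuity -/

lemma continuous_mul_sqrt (t : ℝ) {g : ℝ → ℝ} (hg : Continuous g) (hb : ∀ y, |g y| ≤ 1) :
    Continuous fun x => Real.sqrt x * g (t / Real.sqrt x) := by
  rw [continuous_iff_continuousAt]
  intro x₀
  rcases lt_trichotomy x₀ 0 with h | h | h
  · have hev : (fun x => Real.sqrt x * g (t / Real.sqrt x)) =ᶠ[nhds x₀] fun _ => (0 : ℝ) := by
      filter_upwards [Iio_mem_nhds h] with x hx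
      simp [Real.sqrt_eq_zero'.mpr (le_of_lt hx)]
    exact ContinuousAt.congr continuousAt_const hev.symm
  · subst h
    have hb2 : ∀ x : ℝ, ‖Real.sqrt x * g (t / Real.sqrt x)‖ ≤ Real.sqrt |x| := by
      intro x
      rw [Real.norm_eq_abs, abs_mul, abs_of_nonneg (Real.sqrt_nonneg x)]
      calc Real.sqrt x * |g (t / Real.sqrt x)| ≤ Real.sqrt x * 1 :=
            mul_le_mul_of_nonneg_left (hb _) (Real.sqrt_nonneg x)
        _ = Real.sqrt x := mul_one _
        _ ≤ Real.sqrt |x| := Real.sqrt_le_sqrt (le_abs_self x)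
    have ht : Filter.Tendsto (fun x : ℝ => Real.sqrt |x|) (nhds 0) (nhds 0) := by
      have h1 := (Real.continuous_sqrt.comp continuous_abs).tendsto 0
      simpa [Function.comp_def] using h1
    have := squeeze_zero_norm hb2 ht
    simpa [ContinuousAt] using this
  · have h1 : ContinuousAt Real.sqrt x₀ := Real.continuous_sqrt.continuousAt
    have h2 : Real.sqrt x₀ ≠ 0 := ne_of_gt (Real.sqrt_pos.mpr h)
    exact h1.mul (hg.continuousAt.comp (ContinuousAt.div continuousAt_const h1 h2))

lemma continuous_hfun (t : ℝ) : Continuous (hfun t) :=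
  continuous_mul_sqrt t Real.continuous_sin fun y => Real.abs_sin_le_one y

lemma continuous_pfun (t : ℝ) : Continuous (pfun t) :=
  continuous_mul_sqrt t Real.continuous_cos fun y => Real.abs_cos_le_one y

lemma continuous_afun (t : ℝ) : Continuous (afun t) :=
  ((continuous_hfun t).mul continuous_id).mul continuous_id

lemma continuous_bfun (t : ℝ) : Continuous (bfun t) :=
  (Real.continuous_sqrt.mul (continuous_pfun t)).mul continuous_id

lemma continuous_cfun (t : ℝ) : Continuous (cfun t) :=
  ((continuous_hfun t).mul continuous_id).neg

lemma continuous_dfun (t : ℝ) : Continuous (dfun t) :=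
  (Real.continuous_sqrt.mul (continuous_pfun t)).neg

/-! ### Derivatives in `t` -/

lemma sincore (s t : ℝ) (hs : s ≠ 0) :
    HasDerivAt (fun t => s * Real.sin (t / s)) (Real.cos (t / s)) t := by
  have H := ((Real.hasDerivAt_sin (t / s)).comp t
    ((hasDerivAt_id t).div_const s)).const_mul s
  refine H.congr_deriv ?_
  field_simp

lemma coscore (s t : ℝ) (hs : s ≠ 0) :
    HasDerivAt (fun t => s * Real.cos (t / s)) (-Real.sin (t / s)) t := by
  have H := ((Real.hasDerivAt_cos (t / s)).comp t
    ((hasDerivAt_id t).div_const s)).const_mul s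
  refine H.congr_deriv ?_
  field_simp

lemma sqrt_zero_of_nonpos {x : ℝ} (hx : x ≤ 0) : Real.sqrt x = 0 :=
  Real.sqrt_eq_zero'.mpr hx

lemma hasDerivAt_hfun (x t : ℝ) : HasDerivAt (fun t => hfun t x) (kfun t x) t := by
  rcases le_or_gt x 0 with hx | hx
  · simp only [hfun, kfun, sqrt_zero_of_nonpos hx, zero_mul, if_neg (not_lt.mpr hx)]
    exact hasDerivAt_const t 0
  · simp only [hfun, kfun, if_pos hx]
    exact sincore _ t (Real.sqrt_pos.mpr hx).ne'

lemma hasDerivAt_afun (x t : ℝ) : HasDerivAt (fun t => afun t x) (bfun t x) t := by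
  rcases le_or_gt x 0 with hx | hx
  · simp only [afun, bfun, hfun, pfun, sqrt_zero_of_nonpos hx, zero_mul]
    exact hasDerivAt_const t 0
  · have hss : Real.sqrt x * Real.sqrt x = x := Real.mul_self_sqrt hx.le
    have H := ((sincore _ t (Real.sqrt_pos.mpr hx).ne').mul_const x).mul_const x
    simp only [afun, bfun, hfun, pfun]
    refine H.congr_deriv ?_
    linear_combination (-(Real.cos (t / Real.sqrt x) * x)) * hss

lemma hasDerivAt_bfun (x t : ℝ) : HasDerivAt (fun t => bfun t x) (cfun t x) t := by
  rcases le_or_gt x 0 with hx | hx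
  · simp only [bfun, cfun, hfun, pfun, sqrt_zero_of_nonpos hx, zero_mul, mul_zero, neg_zero]
    exact hasDerivAt_const t 0
  · have H := ((coscore _ t (Real.sqrt_pos.mpr hx).ne').const_mul (Real.sqrt x)).mul_const x
    simp only [bfun, cfun, hfun, pfun]
    refine H.congr_deriv ?_
    ring

lemma hasDerivAt_cfun (x t : ℝ) : HasDerivAt (fun t => cfun t x) (dfun t x) t := by
  rcases le_or_gt x 0 with hx | hx
  · simp only [cfun, dfun, hfun, pfun, sqrt_zero_of_nonpos hx, zero_mul, mul_zero, neg_zero]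
    exact hasDerivAt_const t 0
  · have hss : Real.sqrt x * Real.sqrt x = x := Real.mul_self_sqrt hx.le
    have H := ((sincore _ t (Real.sqrt_pos.mpr hx).ne').mul_const x).neg
    simp only [cfun, dfun, hfun, pfun]
    refine H.congr_deriv ?_
    linear_combination Real.cos (t / Real.sqrt x) * hss

lemma hasDerivAt_dfun (x t : ℝ) : HasDerivAt (fun t => dfun t x) (hfun t x) t := by
  rcases le_or_gt x 0 with hx | hx
  · simp only [dfun, hfun, pfun, sqrt_zero_of_nonpos hx, zero_mul, mul_zero, neg_zero]
    exact hasDerivAt_const t 0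
  · have H := ((coscore _ t (Real.sqrt_pos.mpr hx).ne').const_mul (Real.sqrt x)).neg
    simp only [dfun, hfun, pfun]
    refine H.congr_deriv ?_
    ring

/-! ### Pointwise bounds -/

lemma abs_hfun_le (t x : ℝ) : |hfun t x| ≤ Real.sqrt |x| := by
  rw [hfun, abs_mul, abs_of_nonneg (Real.sqrt_nonneg x)]
  calc Real.sqrt x * |Real.sin (t / Real.sqrt x)| ≤ Real.sqrt x * 1 :=
        mul_le_mul_of_nonneg_left (Real.abs_sin_le_one _) (Real.sqrt_nonneg x)
    _ = Real.sqrt x := mul_one _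
    _ ≤ Real.sqrt |x| := Real.sqrt_le_sqrt (le_abs_self x)

lemma abs_pfun_le (t x : ℝ) : |pfun t x| ≤ Real.sqrt |x| := by
  rw [pfun, abs_mul, abs_of_nonneg (Real.sqrt_nonneg x)]
  calc Real.sqrt x * |Real.cos (t / Real.sqrt x)| ≤ Real.sqrt x * 1 :=
        mul_le_mul_of_nonneg_left (Real.abs_cos_le_one _) (Real.sqrt_nonneg x)
    _ = Real.sqrt x := mul_one _
    _ ≤ Real.sqrt |x| := Real.sqrt_le_sqrt (le_abs_self x)

lemma sqrt_abs_le {M x : ℝ} (hM : 0 ≤ M) (hx : |x| ≤ M) : Real.sqrt |x| ≤ 1 + M := by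
  have h1 : |x| ≤ (1 + M) ^ 2 := by nlinarith [abs_nonneg x]
  calc Real.sqrt |x| ≤ Real.sqrt ((1 + M) ^ 2) := Real.sqrt_le_sqrt h1
    _ = 1 + M := Real.sqrt_sq (by linarith)

lemma abs_cfun_le {M : ℝ} (hM : 0 ≤ M) (t x : ℝ) (hx : |x| ≤ M) :
    |cfun t x| ≤ (1 + M) ^ 2 := by
  rw [cfun, abs_neg, abs_mul]
  have h1 := abs_hfun_le t x
  have h2 := sqrt_abs_le hM hx
  have h3 : (0:ℝ) ≤ Real.sqrt |x| := Real.sqrt_nonneg _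
  have h4 := abs_nonneg (hfun t x)
  nlinarith [abs_nonneg x]

lemma abs_dfun_le {M : ℝ} (hM : 0 ≤ M) (t x : ℝ) (hx : |x| ≤ M) :
    |dfun t x| ≤ (1 + M) ^ 2 := by
  rw [dfun, abs_neg, abs_mul]
  have h1 := abs_pfun_le t x
  have h2 := sqrt_abs_le hM hx
  have h3 : |Real.sqrt x| ≤ Real.sqrt |x| := by
    rw [abs_of_nonneg (Real.sqrt_nonneg x)]
    exact Real.sqrt_le_sqrt (le_abs_self x)
  have h4 : (0:ℝ) ≤ Real.sqrt |x| := Real.sqrt_nonneg _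
  nlinarith [abs_nonneg (Real.sqrt x), abs_nonneg (pfun t x)]

lemma abs_hfun_le' {M : ℝ} (hM : 0 ≤ M) (t x : ℝ) (hx : |x| ≤ M) :
    |hfun t x| ≤ (1 + M) ^ 2 := by
  have h1 := abs_hfun_le t x
  have h2 := sqrt_abs_le hM hx
  nlinarith

/-! ### Scalar Taylor estimates -/

lemma lipschitz_of_deriv_bound {v e : ℝ → ℝ} {C : ℝ}
    (hve : ∀ t, HasDerivAt v (e t) t) (hbound : ∀ t, |e t| ≤ C) (a b : ℝ) :
    |v b - v a| ≤ C * |b - a| := by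
  have := Convex.norm_image_sub_le_of_norm_hasDerivWithin_le (f := v) (f' := e)
    (s := Set.univ) (fun y _ => (hve y).hasDerivWithinAt)
    (fun y _ => by simpa [Real.norm_eq_abs] using hbound y) convex_univ
    (Set.mem_univ a) (Set.mem_univ b)
  simpa [Real.norm_eq_abs] using this

lemma taylor_bound {u v e : ℝ → ℝ} {C : ℝ}
    (huv : ∀ t, HasDerivAt u (v t) t) (hve : ∀ t, HasDerivAt v (e t) t)
    (hbound : ∀ t, |e t| ≤ C) (t t' : ℝ) :
    |u t' - u t - (t' - t) * v t| ≤ C * |t' - t| * |t' - t| := by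
  have hg : ∀ s, HasDerivAt (fun s => u s - u t - (s - t) * v t) (v s - v t) s := by
    intro s
    have h1 : HasDerivAt (fun s : ℝ => (s - t) * v t) (v t) s := by
      simpa using ((hasDerivAt_id s).sub_const t).mul_const (v t)
    exact ((huv s).sub_const (u t)).sub h1
  have key := Convex.norm_image_sub_le_of_norm_hasDerivWithin_le
    (f := fun s => u s - u t - (s - t) * v t) (f' := fun s => v s - v t)
    (s := Set.uIcc t t') (fun y _ => (hg y).hasDerivWithinAt)
    (fun y hy => by
      have h1 : |v y - v t| ≤ C * |y - t| := lipschitz_of_deriv_bound hve hbound t y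
      have h2 : |y - t| ≤ |t' - t| := by
        rcases Set.mem_uIcc.mp hy with ⟨h3, h4⟩ | ⟨h3, h4⟩ <;>
          rw [abs_sub_le_iff] <;>
          constructor <;>
          nlinarith [le_abs_self (t' - t), neg_abs_le (t' - t)]
      have hC : 0 ≤ C := le_trans (abs_nonneg _) (hbound t)
      calc ‖v y - v t‖ = |v y - v t| := rfl
        _ ≤ C * |y - t| := h1
        _ ≤ C * |t' - t| := by nlinarith)
    (convex_uIcc t t') Set.left_mem_uIcc Set.right_mem_uIcc
  simpa [Real.norm_eq_abs, mul_comm] using key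

/-! ### Operator-valued lemmas -/

variable {H : Type*} [NormedAddCommGroup H] [InnerProductSpace ℂ H] [CompleteSpace H]

lemma norm_cfc_le' [Nontrivial H] (T : H →L[ℂ] H) {f : ℝ → ℝ} {C : ℝ} (hC : 0 ≤ C)
    (h : ∀ x : ℝ, |x| ≤ ‖T‖ → |f x| ≤ C) : ‖cfc f T‖ ≤ C :=
  norm_cfc_le hC fun x hx => h x (by
    simpa [Real.norm_eq_abs] using spectrum.norm_le_norm_of_mem hx)

lemma hasDerivAt_cfc_apply [Nontrivial H] (T : H →L[ℂ] H)
    {u v e : ℝ → ℝ → ℝ} {C : ℝ}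
    (hu : ∀ t, Continuous (u t)) (hv : ∀ t, Continuous (v t))
    (hd1 : ∀ x t, HasDerivAt (fun t => u t x) (v t x) t)
    (hd2 : ∀ x t, HasDerivAt (fun t => v t x) (e t x) t)
    (hb : ∀ t x, |x| ≤ ‖T‖ → |e t x| ≤ C)
    (w : H) (t : ℝ) :
    HasDerivAt (fun t => cfc (u t) T w) (cfc (v t) T w) t := by
  have hC : 0 ≤ C := le_trans (abs_nonneg _) (hb 0 0 (by simp))
  have key : ∀ t' : ℝ, ‖cfc (u t') T w - cfc (u t) T w - (t' - t) • cfc (v t) T w‖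
      ≤ C * |t' - t| * |t' - t| * ‖w‖ := by
    intro t'
    have e0 : (fun x => u t' x - (u t x + (t' - t) * v t x)) =
        fun x => u t' x - u t x - (t' - t) * v t x := by funext x; ring
    have e1 : cfc (fun x => u t' x - u t x - (t' - t) * v t x) T
        = cfc (u t') T - (cfc (u t) T + (t' - t) • cfc (v t) T) := by
      rw [← e0, cfc_sub (u t') (fun x => u t x + (t' - t) * v t x) T (hu t').continuousOn
        (((hu t).add (continuous_const.mul (hv t))).continuousOn)]
      congr 1
      rw [cfc_add (a := T) (u t) (fun x => (t' - t) * v t x) (hu t).continuousOn (continuous_const.mul (hv t)).continuousOn]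
      congr 1
      have : (fun x => (t' - t) * v t x) = fun x => (t' - t) • v t x := by
        funext x; simp [smul_eq_mul]
      rw [this, cfc_smul _ _ T (hv t).continuousOn]
    have e2 : cfc (u t') T w - cfc (u t) T w - (t' - t) • cfc (v t) T w
        = (cfc (fun x => u t' x - u t x - (t' - t) * v t x) T) w := by
      rw [e1]
      simp only [ContinuousLinearMap.sub_apply, ContinuousLinearMap.add_apply,
        ContinuousLinearMap.coe_smul', Pi.smul_apply]
      abel
    rw [e2]
    calc ‖(cfc (fun x => u t' x - u t x - (t' - t) * v t x) T) w‖
        ≤ ‖cfc (fun x => u t' x - u t x - (t' - t) * v t x) T‖ * ‖w‖ :=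
          ContinuousLinearMap.le_opNorm _ w
      _ ≤ (C * |t' - t| * |t' - t|) * ‖w‖ := by
          apply mul_le_mul_of_nonneg_right _ (norm_nonneg w)
          apply norm_cfc_le' T (by positivity)
          intro x hx
          exact taylor_bound (fun s => hd1 x s) (fun s => hd2 x s)
            (fun s => hb s x hx) t t'
      _ = C * |t' - t| * |t' - t| * ‖w‖ := by ring
  rw [hasDerivAt_iff_isLittleO, Asymptotics.isLittleO_iff]
  intro c hc
  have hpos : (0:ℝ) < C * ‖w‖ + 1 := by positivity
  filter_upwards [Metric.ball_mem_nhds t (show (0:ℝ) < c / (C * ‖w‖ + 1) by positivity)]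
    with t' ht'
  have h1 : |t' - t| < c / (C * ‖w‖ + 1) := by
    simpa [Real.dist_eq] using ht'
  have h2 : (C * ‖w‖ + 1) * |t' - t| < c := by
    rw [← lt_div_iff₀' hpos]; exact h1
  calc ‖cfc (u t') T w - cfc (u t) T w - (t' - t) • cfc (v t) T w‖
      ≤ C * |t' - t| * |t' - t| * ‖w‖ := key t'
    _ ≤ c * ‖t' - t‖ := by
        rw [Real.norm_eq_abs]
        nlinarith [abs_nonneg (t' - t), norm_nonneg w, hC]

lemma waveOp_eq (T : H →L[ℂ] H) (t : ℝ) : waveOp T t = cfc (hfun t) T := by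
  unfold waveOp
  congr 1
  funext x
  by_cases h : 0 < x
  · simp [hfun, h]
  · simp [hfun, h, sqrt_zero_of_nonpos (not_lt.mp h)]

lemma isSelfAdjoint_waveOp (T : H →L[ℂ] H) (t : ℝ) : IsSelfAdjoint (waveOp T t) := by
  rw [waveOp_eq]
  exact cfc_predicate (hfun t) T

lemma continuous_waveOp [Nontrivial H] (T : H →L[ℂ] H) :
    Continuous fun t => waveOp T t := by
  have key : ∀ t t' : ℝ, dist (waveOp T t) (waveOp T t') ≤ 1 * dist t t' := by
    intro t t'
    rw [dist_eq_norm, dist_eq_norm, one_mul, waveOp_eq, waveOp_eq,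
      ← cfc_sub (hfun t) (hfun t') T (continuous_hfun t).continuousOn
        (continuous_hfun t').continuousOn, Real.norm_eq_abs]
    apply norm_cfc_le' T (abs_nonneg _)
    intro x _
    have := lipschitz_of_deriv_bound (v := fun s => hfun s x) (e := fun s => kfun s x)
      (hasDerivAt_hfun x) (fun s => by
        unfold kfun; split
        · exact Real.abs_cos_le_one _
        · simp) t' t
    simpa [one_mul] using this
  exact (LipschitzWith.of_dist_le_mul (K := 1) (by
    intro x y
    simpa using key x y)).continuous

lemma cfc_afun_eq (T : H →L[ℂ] H) (hT : IsSelfAdjoint T) (t : ℝ) :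
    cfc (afun t) T = waveOp T t * T * T := by
  have hid : cfc (fun x : ℝ => x) T = T := cfc_id' ℝ T hT
  have m2 : cfc (fun x : ℝ => hfun t x * x) T = cfc (hfun t) T * T := by
    rw [cfc_mul (hfun t) (fun x => x) T (continuous_hfun t).continuousOn
      continuous_id.continuousOn, hid]
  have m1 : cfc (fun x : ℝ => hfun t x * x * x) T
      = cfc (fun x : ℝ => hfun t x * x) T * T := by
    rw [cfc_mul (fun x => hfun t x * x) (fun x => x) T
      ((continuous_hfun t).mul continuous_id).continuousOn continuous_id.continuousOn, hid]
  have : afun t = fun x : ℝ => hfun t x * x * x := by funext x; rfl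
  rw [this, m1, m2, waveOp_eq]

lemma waveOp_apply_T_T (T : H →L[ℂ] H) (hT : IsSelfAdjoint T) (t : ℝ) (w : H) :
    waveOp T t (T (T w)) = cfc (afun t) T w := by
  rw [cfc_afun_eq T hT t]
  simp [ContinuousLinearMap.mul_apply]

lemma cfc_afun_zero (T : H →L[ℂ] H) : cfc (afun 0) T = 0 := by
  have : afun 0 = fun _ : ℝ => (0:ℝ) := by
    funext x
    simp [afun, hfun]
  rw [this]
  exact cfc_const_zero ℝ T

lemma cfc_bfun_zero (T : H →L[ℂ] H) (hT : IsSelfAdjoint T)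
    (hspec : ∀ x ∈ spectrum ℝ T, (0:ℝ) ≤ x) : cfc (bfun 0) T = T * T := by
  have heq : (spectrum ℝ T).EqOn (bfun 0) (fun x => x * x) := by
    intro x hx
    have : Real.sqrt x * Real.sqrt x = x := Real.mul_self_sqrt (hspec x hx)
    simp only [bfun, pfun, zero_div, Real.cos_zero, mul_one]
    linear_combination x * this
  rw [cfc_congr heq, cfc_mul (fun x => x) (fun x => x) T continuous_id.continuousOn
    continuous_id.continuousOn, cfc_id' ℝ T hT]

end Stmt7Aux

namespace Stmt7Aux

variable {H : Type*} [NormedAddCommGroup H] [InnerProductSpace ℂ H] [CompleteSpace H]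

lemma continuous_cfc_chain [Nontrivial H] (T : H →L[ℂ] H) (w : H) (τ : ℝ)
    {u v e : ℝ → ℝ → ℝ} {C : ℝ}
    (hu : ∀ t, Continuous (u t)) (hv : ∀ t, Continuous (v t))
    (hd1 : ∀ x t, HasDerivAt (fun t => u t x) (v t x) t)
    (hd2 : ∀ x t, HasDerivAt (fun t => v t x) (e t x) t)
    (hb : ∀ t x, |x| ≤ ‖T‖ → |e t x| ≤ C) :
    Continuous fun s => cfc (u (τ - s)) T w := by
  have hdiff : Differentiable ℝ fun s => cfc (u (τ - s)) T w := by
    intro s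
    have base := hasDerivAt_cfc_apply T hu hv hd1 hd2 hb w (τ - s)
    have hτs : HasDerivAt (fun s : ℝ => τ - s) (-1) s := by
      simpa using (hasDerivAt_id s).const_sub τ
    exact (HasDerivAt.scomp (x := s) (h := fun s : ℝ => τ - s) base hτs).differentiableAt
  exact hdiff.continuous

lemma deriv_cfc_chain [Nontrivial H] (T : H →L[ℂ] H) (w : H) (τ : ℝ)
    {u v e : ℝ → ℝ → ℝ} {C : ℝ}
    (hu : ∀ t, Continuous (u t)) (hv : ∀ t, Continuous (v t))
    (hd1 : ∀ x t, HasDerivAt (fun t => u t x) (v t x) t)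
    (hd2 : ∀ x t, HasDerivAt (fun t => v t x) (e t x) t)
    (hb : ∀ t x, |x| ≤ ‖T‖ → |e t x| ≤ C) (s : ℝ) :
    HasDerivAt (fun s => cfc (u (τ - s)) T w) (-(cfc (v (τ - s)) T w)) s := by
  have base := hasDerivAt_cfc_apply T hu hv hd1 hd2 hb w (τ - s)
  have hτs : HasDerivAt (fun s : ℝ => τ - s) (-1) s := by
    simpa using (hasDerivAt_id s).const_sub τ
  have := HasDerivAt.scomp (x := s) (h := fun s : ℝ => τ - s) base hτs
  simpa [Function.comp_def] using this

lemma key_identity [Nontrivial H] (T : H →L[ℂ] H) (hT : IsSelfAdjoint T)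
    (hspec : ∀ x ∈ spectrum ℝ T, (0:ℝ) ≤ x)
    (f : ℝ → H) (hf : ContDiff ℝ (⊤ : ℕ∞) f) (ε : ℝ) (hε : 0 < ε)
    (hf0 : ∀ t ≤ ε, f t = 0) (τ : ℝ) (w : H) :
    ⟪T (T w), wave T f τ⟫ = ∫ s in (0:ℝ)..τ, ⟪cfc (cfun (τ - s)) T w, f s⟫ := by
  have hf1 : ContDiff ℝ (⊤ : ℕ∞) (deriv f) := (contDiff_infty_iff_deriv.mp hf).2
  have hf2c : Continuous (deriv (deriv f)) := ((contDiff_infty_iff_deriv.mp hf1).2).continuous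
  have hfc : Continuous f := hf.continuous
  have hdf : ∀ s, HasDerivAt f (deriv f s) s := fun s =>
    ((hf.differentiable (by simp)) s).hasDerivAt
  have hdf1 : ∀ s, HasDerivAt (deriv f) (deriv (deriv f) s) s := fun s =>
    ((hf1.differentiable (by simp)) s).hasDerivAt
  have hM0 : (0:ℝ) ≤ ‖T‖ := norm_nonneg T
  have hbc : ∀ t x, |x| ≤ ‖T‖ → |cfun t x| ≤ (1 + ‖T‖) ^ 2 := fun t x hx =>
    abs_cfun_le hM0 t x hx
  have hbd : ∀ t x, |x| ≤ ‖T‖ → |dfun t x| ≤ (1 + ‖T‖) ^ 2 := fun t x hx =>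
    abs_dfun_le hM0 t x hx
  have hbh : ∀ t x, |x| ≤ ‖T‖ → |hfun t x| ≤ (1 + ‖T‖) ^ 2 := fun t x hx =>
    abs_hfun_le' hM0 t x hx
  have hGa : ∀ s, HasDerivAt (fun s => cfc (afun (τ - s)) T w)
      (-(cfc (bfun (τ - s)) T w)) s :=
    deriv_cfc_chain T w τ continuous_afun continuous_bfun hasDerivAt_afun hasDerivAt_bfun hbc
  have hGb : ∀ s, HasDerivAt (fun s => cfc (bfun (τ - s)) T w)
      (-(cfc (cfun (τ - s)) T w)) s :=
    deriv_cfc_chain T w τ continuous_bfun continuous_cfun hasDerivAt_bfun hasDerivAt_cfun hbd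
  have contA : Continuous fun s => cfc (afun (τ - s)) T w :=
    continuous_cfc_chain T w τ continuous_afun continuous_bfun hasDerivAt_afun hasDerivAt_bfun hbc
  have contC : Continuous fun s => cfc (cfun (τ - s)) T w :=
    continuous_cfc_chain T w τ continuous_cfun continuous_dfun hasDerivAt_cfun hasDerivAt_dfun hbh
  set Φ : ℝ → ℂ := fun s =>
    ⟪cfc (afun (τ - s)) T w, deriv f s⟫ + ⟪cfc (bfun (τ - s)) T w, f s⟫ with hΦdef
  have hΦ : ∀ s, HasDerivAt Φ
      (⟪cfc (afun (τ - s)) T w, deriv (deriv f) s⟫ - ⟪cfc (cfun (τ - s)) T w, f s⟫) s := by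
    intro s
    have h1 := HasDerivAt.inner ℂ (hGa s) (hdf1 s)
    have h2 := HasDerivAt.inner ℂ (hGb s) (hdf s)
    have h3 := h1.add h2
    refine h3.congr_deriv ?_
    simp only [inner_neg_left]
    ring
  have hint1 : IntervalIntegrable
      (fun s => ⟪cfc (afun (τ - s)) T w, deriv (deriv f) s⟫) volume 0 τ :=
    (contA.inner hf2c).intervalIntegrable _ _
  have hint2 : IntervalIntegrable
      (fun s => ⟪cfc (cfun (τ - s)) T w, f s⟫) volume 0 τ :=
    (contC.inner hfc).intervalIntegrable _ _
  have hFTC : (∫ s in (0:ℝ)..τ, (⟪cfc (afun (τ - s)) T w, deriv (deriv f) s⟫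
      - ⟪cfc (cfun (τ - s)) T w, f s⟫)) = Φ τ - Φ 0 :=
    intervalIntegral.integral_eq_sub_of_hasDerivAt (fun s _ => hΦ s) (hint1.sub hint2)
  have hf'0 : deriv f 0 = 0 := by
    have hev : f =ᶠ[nhds (0:ℝ)] fun _ => (0:H) := by
      filter_upwards [Iio_mem_nhds hε] with t ht
      exact hf0 t ht.le
    rw [hev.deriv_eq]
    exact deriv_const _ _
  have hΦ0 : Φ 0 = 0 := by
    simp [hΦdef, hf'0, hf0 0 hε.le]
  have hΦτ : Φ τ = ⟪T (T w), f τ⟫ := by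
    have h1 : cfc (afun 0) T = 0 := cfc_afun_zero T
    have h2 : cfc (bfun 0) T = T * T := cfc_bfun_zero T hT hspec
    simp [hΦdef, sub_self, h1, h2, ContinuousLinearMap.mul_apply]
  have hintwave : IntervalIntegrable
      (fun s => waveOp T (τ - s) (deriv (deriv f) s)) volume 0 τ := by
    apply Continuous.intervalIntegrable
    exact ((continuous_waveOp T).comp (continuous_const.sub continuous_id)).clm_apply hf2c
  have hswap : ⟪T (T w), ∫ s in (0:ℝ)..τ, waveOp T (τ - s) (deriv (deriv f) s)⟫
      = ∫ s in (0:ℝ)..τ, ⟪T (T w), waveOp T (τ - s) (deriv (deriv f) s)⟫ := by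
    simpa using ((innerSL ℂ (T (T w))).intervalIntegral_comp_comm hintwave).symm
  have hpoint : ∀ s : ℝ, ⟪T (T w), waveOp T (τ - s) (deriv (deriv f) s)⟫
      = ⟪cfc (afun (τ - s)) T w, deriv (deriv f) s⟫ := by
    intro s
    have hadj : (waveOp T (τ - s)).adjoint = waveOp T (τ - s) := by
      rw [← ContinuousLinearMap.star_eq_adjoint]
      exact isSelfAdjoint_waveOp T (τ - s)
    rw [← waveOp_apply_T_T T hT (τ - s) w, ← ContinuousLinearMap.adjoint_inner_left
      (waveOp T (τ - s)), hadj]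
  have hwave : wave T f τ = -f τ + ∫ s in (0:ℝ)..τ, waveOp T (τ - s) (deriv (deriv f) s) := rfl
  rw [hwave, inner_add_right, inner_neg_right, hswap,
    intervalIntegral.integral_congr (fun s _ => hpoint s)]
  have hsplit : (∫ s in (0:ℝ)..τ, ⟪cfc (afun (τ - s)) T w, deriv (deriv f) s⟫)
      = (Φ τ - Φ 0) + ∫ s in (0:ℝ)..τ, ⟪cfc (cfun (τ - s)) T w, f s⟫ := by
    rw [← hFTC, ← intervalIntegral.integral_add (hint1.sub hint2) hint2]
    congr 1
    funext s
    ring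
  rw [hsplit, hΦτ, hΦ0]
  ring

lemma pairing_bound [Nontrivial H] (T : H →L[ℂ] H) {τ : ℝ} (hτ : 0 ≤ τ)
    (f : ℝ → H) (hfc : Continuous f)
    (w : H) (hcont : Continuous fun s => cfc (cfun (τ - s)) T w) :
    ‖∫ s in (0:ℝ)..τ, ⟪cfc (cfun (τ - s)) T w, f s⟫‖
      ≤ (1 + ‖T‖) ^ 2 * ‖w‖ * ∫ s in (0:ℝ)..τ, ‖f s‖ := by
  have hCw : ∀ s : ℝ, ‖cfc (cfun (τ - s)) T w‖ ≤ (1 + ‖T‖) ^ 2 * ‖w‖ := by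
    intro s
    calc ‖cfc (cfun (τ - s)) T w‖ ≤ ‖cfc (cfun (τ - s)) T‖ * ‖w‖ :=
          ContinuousLinearMap.le_opNorm _ _
      _ ≤ (1 + ‖T‖) ^ 2 * ‖w‖ := mul_le_mul_of_nonneg_right
          (norm_cfc_le' T (by positivity)
            (fun x hx => abs_cfun_le (norm_nonneg T) _ x hx)) (norm_nonneg w)
  calc ‖∫ s in (0:ℝ)..τ, ⟪cfc (cfun (τ - s)) T w, f s⟫‖
      ≤ ∫ s in (0:ℝ)..τ, ‖⟪cfc (cfun (τ - s)) T w, f s⟫‖ :=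
        intervalIntegral.norm_integral_le_integral_norm hτ
    _ ≤ ∫ s in (0:ℝ)..τ, (1 + ‖T‖) ^ 2 * ‖w‖ * ‖f s‖ := by
        apply intervalIntegral.integral_mono_on hτ
          ((hcont.inner hfc).norm.intervalIntegrable _ _)
          ((continuous_const.mul hfc.norm).intervalIntegrable _ _)
        intro s _
        calc ‖⟪cfc (cfun (τ - s)) T w, f s⟫‖ ≤ ‖cfc (cfun (τ - s)) T w‖ * ‖f s‖ :=
              norm_inner_le_norm _ _
          _ ≤ (1 + ‖T‖) ^ 2 * ‖w‖ * ‖f s‖ :=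
              mul_le_mul_of_nonneg_right (hCw s) (norm_nonneg _)
    _ = (1 + ‖T‖) ^ 2 * ‖w‖ * ∫ s in (0:ℝ)..τ, ‖f s‖ := by
        rw [← intervalIntegral.integral_const_mul]

lemma tendsto_integral_norm {τ : ℝ} (hτ : 0 < τ) (F : ℕ → ℝ → H)
    (hFc : ∀ n, Continuous (F n))
    (hnorm : Filter.Tendsto (fun n => ∫ s in (0:ℝ)..τ, ‖F n s‖ ^ 2)
      Filter.atTop (nhds 0)) :
    Filter.Tendsto (fun n => ∫ s in (0:ℝ)..τ, ‖F n s‖) Filter.atTop (nhds 0) := by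
  rw [Metric.tendsto_atTop] at hnorm ⊢
  intro δ hδ
  obtain ⟨N, hN⟩ := hnorm (δ ^ 2 / τ) (by positivity)
  refine ⟨N, fun n hn => ?_⟩
  have h1 : ∫ s in (0:ℝ)..τ, ‖F n s‖ ^ 2 < δ ^ 2 / τ := by
    have h2 := hN n hn
    rw [Real.dist_eq, sub_zero] at h2
    exact lt_of_le_of_lt (le_abs_self _) h2
  have hintp : IntervalIntegrable (fun s => ‖F n s‖ ^ 2) volume 0 τ :=
    ((hFc n).norm.pow 2).intervalIntegrable _ _
  have hintn : IntervalIntegrable (fun s => ‖F n s‖) volume 0 τ :=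
    (hFc n).norm.intervalIntegrable _ _
  have hnn : 0 ≤ ∫ s in (0:ℝ)..τ, ‖F n s‖ :=
    intervalIntegral.integral_nonneg hτ.le fun s _ => norm_nonneg _
  rw [Real.dist_eq, sub_zero, abs_of_nonneg hnn]
  have hptwise : ∀ z : ℝ, 0 ≤ z → z ≤ δ / (2 * τ) + τ / (2 * δ) * z ^ 2 := by
    intro z hz
    rw [← sub_nonneg]
    have hrw : δ / (2 * τ) + τ / (2 * δ) * z ^ 2 - z = (τ * z - δ) ^ 2 / (2 * τ * δ) := by
      field_simp
      ring
    rw [hrw]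
    positivity
  have hub : (∫ s in (0:ℝ)..τ, ‖F n s‖)
      ≤ ∫ s in (0:ℝ)..τ, (δ / (2 * τ) + τ / (2 * δ) * ‖F n s‖ ^ 2) := by
    apply intervalIntegral.integral_mono_on hτ.le hintn
      ((continuous_const.add (continuous_const.mul ((hFc n).norm.pow 2))).intervalIntegrable _ _)
    intro s _
    exact hptwise _ (norm_nonneg _)
  have hub2 : (∫ s in (0:ℝ)..τ, (δ / (2 * τ) + τ / (2 * δ) * ‖F n s‖ ^ 2))
      = δ / (2 * τ) * τ + τ / (2 * δ) * ∫ s in (0:ℝ)..τ, ‖F n s‖ ^ 2 := by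
    rw [intervalIntegral.integral_add (intervalIntegrable_const)
      (hintp.const_mul _), intervalIntegral.integral_const,
      intervalIntegral.integral_const_mul]
    simp [smul_eq_mul]
    ring
  have hfinal : δ / (2 * τ) * τ + τ / (2 * δ) * (δ ^ 2 / τ) = δ := by
    field_simp
    ring
  calc (∫ s in (0:ℝ)..τ, ‖F n s‖)
      ≤ δ / (2 * τ) * τ + τ / (2 * δ) * ∫ s in (0:ℝ)..τ, ‖F n s‖ ^ 2 := by
        rw [← hub2]; exact hub
    _ < δ / (2 * τ) * τ + τ / (2 * δ) * (δ ^ 2 / τ) := by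
        have := mul_lt_mul_of_pos_left h1 (show (0:ℝ) < τ / (2 * δ) by positivity)
        linarith
    _ = δ := hfinal

end Stmt7Aux

theorem stmt7' {H : Type*} [NormedAddCommGroup H] [InnerProductSpace ℂ H] [CompleteSpace H]
    (T : H →L[ℂ] H)
    (hT : IsSelfAdjoint T) (hTp : ∀ x : H, 0 ≤ (⟪T x, x⟫).re)
    (hTi : Function.Injective T)
    (τ : ℝ) (hτ : 0 < τ)
    (F : ℕ → ℝ → H) (hF1 : ∀ n, ContDiff ℝ (⊤ : ℕ∞) (F n))
    (hF2 : ∀ n, ∃ ε > 0, ∀ t ≤ ε, F n t = 0) (y : H)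
    (hnorm : Filter.Tendsto (fun n => ∫ s in (0:ℝ)..τ, ‖F n s‖ ^ 2) Filter.atTop (nhds 0))
    (hconv : Filter.Tendsto (fun n => wave T (F n) τ) Filter.atTop (nhds y)) :
    y = 0 := by
  rcases subsingleton_or_nontrivial H with hsub | hnt
  · exact Subsingleton.elim y 0
  · have hTpos : (0 : H →L[ℂ] H) ≤ T := by
      rw [ContinuousLinearMap.nonneg_iff_isPositive]
      refine ⟨hT.isSymmetric, fun x => ?_⟩
      have := hTp x
      simpa [ContinuousLinearMap.reApplyInnerSelf_apply] using this
    have hspec : ∀ x ∈ spectrum ℝ T, (0:ℝ) ≤ x := fun x hx =>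
      spectrum_nonneg_of_nonneg hTpos hx
    have hkey : ∀ w : H, ⟪T (T w), y⟫ = 0 := by
      intro w
      have hbh : ∀ t x, |x| ≤ ‖T‖ → |Stmt7Aux.hfun t x| ≤ (1 + ‖T‖) ^ 2 := fun t x hx =>
        Stmt7Aux.abs_hfun_le' (norm_nonneg T) t x hx
      have contC : Continuous fun s => cfc (Stmt7Aux.cfun (τ - s)) T w :=
        Stmt7Aux.continuous_cfc_chain T w τ Stmt7Aux.continuous_cfun Stmt7Aux.continuous_dfun
          Stmt7Aux.hasDerivAt_cfun Stmt7Aux.hasDerivAt_dfun hbh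
      have hid : ∀ n, ⟪T (T w), wave T (F n) τ⟫
          = ∫ s in (0:ℝ)..τ, ⟪cfc (Stmt7Aux.cfun (τ - s)) T w, F n s⟫ := by
        intro n
        obtain ⟨ε, hε, hvan⟩ := hF2 n
        exact Stmt7Aux.key_identity T hT hspec (F n) (hF1 n) ε hε hvan τ w
      have hbnd : ∀ n, ‖⟪T (T w), wave T (F n) τ⟫‖
          ≤ (1 + ‖T‖) ^ 2 * ‖w‖ * ∫ s in (0:ℝ)..τ, ‖F n s‖ := by
        intro n
        rw [hid n]
        exact Stmt7Aux.pairing_bound T hτ.le (F n) (hF1 n).continuous w contC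
      have hzero : Filter.Tendsto (fun n => ⟪T (T w), wave T (F n) τ⟫)
          Filter.atTop (nhds 0) := by
        have h1 := Stmt7Aux.tendsto_integral_norm hτ F (fun n => (hF1 n).continuous) hnorm
        have h2 : Filter.Tendsto (fun n => (1 + ‖T‖) ^ 2 * ‖w‖ * ∫ s in (0:ℝ)..τ, ‖F n s‖)
            Filter.atTop (nhds 0) := by
          have := h1.const_mul ((1 + ‖T‖) ^ 2 * ‖w‖)
          simpa using this
        exact squeeze_zero_norm hbnd h2
      have hlim : Filter.Tendsto (fun n => ⟪T (T w), wave T (F n) τ⟫) Filter.atTop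
          (nhds ⟪T (T w), y⟫) := Filter.Tendsto.inner tendsto_const_nhds hconv
      exact tendsto_nhds_unique hlim hzero
    have hTadj : T.adjoint = T := by
      rw [← ContinuousLinearMap.star_eq_adjoint]; exact hT
    have hstep : ∀ z x : H, ⟪T z, x⟫ = ⟪z, T x⟫ := by
      intro z x
      calc ⟪T z, x⟫ = ⟪T.adjoint z, x⟫ := by rw [hTadj]
        _ = ⟪z, T x⟫ := ContinuousLinearMap.adjoint_inner_left T x z
    have hTTy : T (T y) = 0 := by
      have h1 : ⟪T (T (T (T y))), y⟫ = 0 := hkey (T (T y))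
      have h2 : ⟪T (T (T (T y))), y⟫ = ⟪T (T y), T (T y)⟫ := by
        rw [hstep (T (T (T y))) y, hstep (T (T y)) (T y)]
      rw [h2] at h1
      exact inner_self_eq_zero.mp h1
    have hTy : T y = 0 := by
      apply hTi
      rw [map_zero]
      exact hTTy
    apply hTi
    rw [map_zero]
    exact hTy


/-- closability of the input–state map. For every `τ > 0`, if `(f_n)` is a
sequence in `M` with `∫₀^τ ‖f_n(s)‖² ds → 0` and `u^{f_n}(τ) → y` in `H`, then `y = 0`;
i.e. the map `f|_{[0,τ]} ↦ u^f(τ)` is closable from `L²([0,τ]; K)` to `H`. -/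
theorem stmt7 (L₀ L : H →ₗ.[ℂ] H) (T : H →L[ℂ] H) (K : Submodule ℂ H)
    [K.HasOrthogonalProjection] (hs : Setting L₀ L T K) (τ : ℝ) (hτ : 0 < τ)
    (F : ℕ → ℝ → H) (hF : ∀ n, IsSmoothControl K (F n)) (y : H)
    (hnorm : Filter.Tendsto (fun n => ∫ s in (0:ℝ)..τ, ‖F n s‖ ^ 2) Filter.atTop (nhds 0))
    (hconv : Filter.Tendsto (fun n => wave T (F n) τ) Filter.atTop (nhds y)) :
    y = 0 :=
  stmt7' T hs.T_selfadjoint hs.T_positive hs.T_injective τ hτ F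
    (fun n => (hF n).1) (fun n => (hF n).2.2) y hnorm hconv
end
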